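/- arXiv:1011.3379 — 4 statements merged into one kernel-verified Lean document; each statement's English description precedes it below -/
import Mathlib

section
/- Suppose π : (0,1) → (0,∞) is twice continuously differentiable and Lebesgue integrable with ∫₀¹ π(p) dp = 1, and suppose that ∫₀¹ Gφ(p) π(p) dp = 0 for every twice continuously differentiable function φ on [0,1]. Set κᵢ := ∫₀¹ wᵢ(p) π(p) dp for i ∈ {0,1}. Then π satisfies the stationary boundary value problem: ((1/2) v π)''(p) − (μ π)'(p) − λ π(p) = 0 for all p ∈ (0,1); the limits lim_{p→0} (μπ − ((1/2)vπ)')(p) and lim_{p→1} (μπ − ((1/2)vπ)')(p) exist and equal λκ₀ and −λκ₁ respectively; and lim_{p→0} (vπ)(p) = 0 = lim_{p→1} (vπ)(p). -/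
open MeasureTheory Set Filter Topology Asymptotics

/-- The infinitesimal generator of the forward jump-diffusion process (Eq. (7) of the paper). -/
noncomputable def fwdGen (lam : ℝ) (v mu w0 : ℝ → ℝ) (phi : ℝ → ℝ) (p : ℝ) : ℝ :=
  1 / 2 * v p * deriv (deriv phi) p + mu p * deriv phi p
    + lam * w0 p * (phi 0 - phi p) + lam * (1 - w0 p) * (phi 1 - phi p)

/-- Standing assumptions on the coefficients (Assumption 2.1 of the paper). -/
structure ModelAssumptions (lam : ℝ) (v mu w0 : ℝ → ℝ) : Prop where
  lam_nonneg : 0 ≤ lam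
  analytic : ∃ U : Set ℝ, IsOpen U ∧ Icc (0 : ℝ) 1 ⊆ U ∧
    AnalyticOnNhd ℝ v U ∧ AnalyticOnNhd ℝ mu U ∧ AnalyticOnNhd ℝ w0 U
  w0_mem : ∀ p ∈ Icc (0 : ℝ) 1, w0 p ∈ Icc (0 : ℝ) 1
  mu_zero_pos : 0 < mu 0
  mu_one_neg : mu 1 < 0
  v_zero : v 0 = 0
  v_one : v 1 = 0
  v_pos : ∀ p ∈ Ioo (0 : ℝ) 1, 0 < v p
  deriv_v_zero_pos : 0 < deriv v 0
  deriv_v_one_neg : deriv v 1 < 0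

/-- `pi` is a smooth, integrable, normalized, positive solution of the stationary
boundary value problem (Eq. (14) of the paper). -/
structure StationaryDensity (lam : ℝ) (v mu w0 : ℝ → ℝ) (pi : ℝ → ℝ) : Prop where
  contDiffOn : ContDiffOn ℝ 2 pi (Ioo (0 : ℝ) 1)
  pos : ∀ p ∈ Ioo (0 : ℝ) 1, 0 < pi p
  integrableOn : IntegrableOn pi (Ioo (0 : ℝ) 1)
  total_mass : (∫ p in Ioo (0 : ℝ) 1, pi p) = 1
  ode : ∀ p ∈ Ioo (0 : ℝ) 1,
    deriv (deriv fun q => 1 / 2 * v q * pi q) p - deriv (fun q => mu q * pi q) p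
      - lam * pi p = 0
  bc_zero : Tendsto (fun p => mu p * pi p - deriv (fun q => 1 / 2 * v q * pi q) p)
    (𝓝[Ioo (0 : ℝ) 1] 0) (𝓝 (lam * ∫ p in Ioo (0 : ℝ) 1, w0 p * pi p))
  bc_one : Tendsto (fun p => mu p * pi p - deriv (fun q => 1 / 2 * v q * pi q) p)
    (𝓝[Ioo (0 : ℝ) 1] 1) (𝓝 (-(lam * ∫ p in Ioo (0 : ℝ) 1, (1 - w0 p) * pi p)))
  vpi_zero : Tendsto (fun p => v p * pi p) (𝓝[Ioo (0 : ℝ) 1] 0) (𝓝 0)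
  vpi_one : Tendsto (fun p => v p * pi p) (𝓝[Ioo (0 : ℝ) 1] 1) (𝓝 0)

/-- The drift of the diffusive motion of the time-reversed process:
`μ̃(p) = −μ(p) + (vπ)'(p)/π(p)`. -/
noncomputable def bwdDrift (v mu pi : ℝ → ℝ) (p : ℝ) : ℝ :=
  -mu p + deriv (fun q => v q * pi q) p / pi p

/-- The scale density of the backward diffusive motion:
`S̃'(p) = exp(−∫_{1/2}^p 2μ̃(z)/v(z) dz)`. -/
noncomputable def bwdScaleDensity (v mu pi : ℝ → ℝ) (p : ℝ) : ℝ :=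
  Real.exp (-∫ z in (1 / 2 : ℝ)..p, 2 * bwdDrift v mu pi z / v z)

/-- The scale function of the backward diffusive motion: `S̃(p) = ∫_{1/2}^p S̃'(x) dx`. -/
noncomputable def bwdScale (v mu pi : ℝ → ℝ) (p : ℝ) : ℝ :=
  ∫ x in (1 / 2 : ℝ)..p, bwdScaleDensity v mu pi x

/-- The speed density of the backward diffusive motion: `m̃(p) = 1/(v(p)S̃'(p))`. -/
noncomputable def bwdSpeedDensity (v mu pi : ℝ → ℝ) (p : ℝ) : ℝ :=
  1 / (v p * bwdScaleDensity v mu pi p)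


open scoped ContDiff

section Helpers

lemma ode_of_weak (lam : ℝ) (v mu pi : ℝ → ℝ)
    (hv : ∀ p ∈ Icc (0:ℝ) 1, ContDiffAt ℝ 2 v p)
    (hmu : ∀ p ∈ Icc (0:ℝ) 1, ContDiffAt ℝ 2 mu p)
    (hC2 : ContDiffOn ℝ 2 pi (Ioo (0:ℝ) 1))
    (hzero : ∀ g : ℝ → ℝ, ContDiff ℝ ∞ g → HasCompactSupport g → tsupport g ⊆ Ioo (0:ℝ) 1 →
      (∫ p in Ioo (0:ℝ) 1,
        (1 / 2 * v p * pi p * deriv (deriv g) p + mu p * pi p * deriv g p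
          - lam * pi p * g p)) = 0) :
    ∀ p ∈ Ioo (0:ℝ) 1,
      deriv (deriv fun q => 1 / 2 * v q * pi q) p - deriv (fun q => mu q * pi q) p
        - lam * pi p = 0 := by
  set F : ℝ → ℝ := fun q => 1 / 2 * v q * pi q with hFdef
  set M : ℝ → ℝ := fun q => mu q * pi q with hMdef
  have hsub : Ioo (0:ℝ) 1 ⊆ Icc 0 1 := Ioo_subset_Icc_self
  have hv2 : ContDiffOn ℝ 2 v (Ioo (0:ℝ) 1) := fun p hp => (hv p (hsub hp)).contDiffWithinAt
  have hmu2 : ContDiffOn ℝ 2 mu (Ioo (0:ℝ) 1) := fun p hp => (hmu p (hsub hp)).contDiffWithinAt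
  have hF2 : ContDiffOn ℝ 2 F (Ioo (0:ℝ) 1) := (contDiffOn_const.mul hv2).mul hC2
  have hM2 : ContDiffOn ℝ 2 M (Ioo (0:ℝ) 1) := hmu2.mul hC2
  have hF1 : ContDiffOn ℝ 1 (deriv F) (Ioo (0:ℝ) 1) :=
    hF2.deriv_of_isOpen isOpen_Ioo (by norm_num)
  have hM1 : ContDiffOn ℝ 1 (deriv M) (Ioo (0:ℝ) 1) :=
    hM2.deriv_of_isOpen isOpen_Ioo (by norm_num)
  set h : ℝ → ℝ := fun p => deriv (deriv F) p - deriv M p - lam * pi p with hhdef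
  have hcont : ContinuousOn h (Ioo (0:ℝ) 1) := by
    refine ContinuousOn.sub (ContinuousOn.sub ?_ ?_) ?_
    · exact hF1.continuousOn_deriv_of_isOpen isOpen_Ioo le_rfl
    · exact hM1.continuousOn
    · exact continuousOn_const.mul hC2.continuousOn
  have hdF : ∀ p ∈ Ioo (0:ℝ) 1, HasDerivAt F (deriv F p) p := fun p hp =>
    ((hF2.differentiableOn two_ne_zero).differentiableAt (isOpen_Ioo.mem_nhds hp)).hasDerivAt
  have hdF' : ∀ p ∈ Ioo (0:ℝ) 1, HasDerivAt (deriv F) (deriv (deriv F) p) p := fun p hp =>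
    ((hF1.differentiableOn one_ne_zero).differentiableAt (isOpen_Ioo.mem_nhds hp)).hasDerivAt
  have hdM : ∀ p ∈ Ioo (0:ℝ) 1, HasDerivAt M (deriv M p) p := fun p hp =>
    ((hM2.differentiableOn two_ne_zero).differentiableAt (isOpen_Ioo.mem_nhds hp)).hasDerivAt
  haveI : IsFiniteMeasure (volume.restrict (Ioo (0:ℝ) 1)) := by
    constructor
    rw [Measure.restrict_apply_univ, Real.volume_Ioo]
    norm_num
  have hae : ∀ᵐ x ∂(volume.restrict (Ioo (0:ℝ) 1)), x ∈ Ioo (0:ℝ) 1 → h x = 0 := by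
    refine isOpen_Ioo.ae_eq_zero_of_integral_contDiff_smul_eq_zero ?_ ?_
    · exact hcont.locallyIntegrableOn measurableSet_Ioo
    · intro g hg hgsupp hgsub
      rcases eq_or_ne g 0 with rfl | hgne
      · simp
      have hne : (tsupport g).Nonempty := by
        rcases Set.eq_empty_or_nonempty (tsupport g) with he | hne
        · exact absurd (funext fun x => image_eq_zero_of_notMem_tsupport (by simp [he])) hgne
        · exact hne
      have hKc : IsCompact (tsupport g) := hgsupp
      set a' := sInf (tsupport g) with ha'
      set b' := sSup (tsupport g) with hb'
      have ha'K : a' ∈ tsupport g := hKc.sInf_mem hne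
      have hb'K : b' ∈ tsupport g := hKc.sSup_mem hne
      have ha'm : a' ∈ Ioo (0:ℝ) 1 := hgsub ha'K
      have hb'm : b' ∈ Ioo (0:ℝ) 1 := hgsub hb'K
      set a := a' / 2 with ha
      set b := (1 + b') / 2 with hb
      have ha0 : 0 < a := by rw [ha]; linarith [ha'm.1]
      have hb1 : b < 1 := by rw [hb]; linarith [hb'm.2]
      have hab : a < b := by
        have h1 : a' ≤ b' := csInf_le_csSup hne hKc.bddBelow hKc.bddAbove
        rw [ha, hb]; linarith [ha'm.1, hb'm.2]
      have hKsub : tsupport g ⊆ Ioo a b := by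
        intro x hx
        have h1 : a' ≤ x := csInf_le hKc.bddBelow hx
        have h2 : x ≤ b' := le_csSup hKc.bddAbove hx
        exact ⟨by rw [ha]; linarith [ha'm.1], by rw [hb]; linarith [hb'm.2]⟩
      have hIccsub : Icc a b ⊆ Ioo (0:ℝ) 1 := fun x hx =>
        ⟨lt_of_lt_of_le ha0 hx.1, lt_of_le_of_lt hx.2 hb1⟩
      have huv : uIcc a b ⊆ Ioo (0:ℝ) 1 := by rw [uIcc_of_le hab.le]; exact hIccsub
      have hgz : ∀ x, x ∉ Ioo a b → g x = 0 := fun x hx =>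
        image_eq_zero_of_notMem_tsupport fun hxs => hx (hKsub hxs)
      have hg'sub : tsupport (deriv g) ⊆ tsupport g :=
        closure_minimal support_deriv_subset (isClosed_tsupport g)
      have hg'z : ∀ x, x ∉ Ioo a b → deriv g x = 0 := fun x hx =>
        image_eq_zero_of_notMem_tsupport fun hxs => hx (hKsub (hg'sub hxs))
      have hg''z : ∀ x, x ∉ Ioo a b → deriv (deriv g) x = 0 := fun x hx =>
        image_eq_zero_of_notMem_tsupport fun hxs => hx (hKsub (hg'sub
          (closure_minimal support_deriv_subset (isClosed_tsupport (deriv g)) hxs)))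
      have hg2 : ContDiff ℝ 2 g := hg.of_le (WithTop.coe_le_coe.mpr le_top)
      have hg1' : ContDiff ℝ 1 (deriv g) := by
        have := (contDiff_succ_iff_deriv (n := 1)).mp (by norm_num at hg2 ⊢; exact hg2)
        exact this.2.2
      have hdg : ∀ x, HasDerivAt g (deriv g x) x :=
        fun x => (hg2.differentiable two_ne_zero).differentiableAt.hasDerivAt
      have hdg' : ∀ x, HasDerivAt (deriv g) (deriv (deriv g) x) x :=
        fun x => (hg1'.differentiable one_ne_zero).differentiableAt.hasDerivAt
      have hcg'' : Continuous (deriv (deriv g)) := by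
        have := (contDiff_succ_iff_deriv (n := 0)).mp (by norm_num at hg1' ⊢; exact hg1')
        exact this.2.2.continuous
      have hcF : ContinuousOn F (uIcc a b) := hF2.continuousOn.mono huv
      have hcF' : ContinuousOn (deriv F) (uIcc a b) := hF1.continuousOn.mono huv
      have hcF'' : ContinuousOn (deriv (deriv F)) (uIcc a b) :=
        (hF1.continuousOn_deriv_of_isOpen isOpen_Ioo le_rfl).mono huv
      have hcM : ContinuousOn M (uIcc a b) := hM2.continuousOn.mono huv
      have hcM' : ContinuousOn (deriv M) (uIcc a b) := hM1.continuousOn.mono huv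
      have hcpi : ContinuousOn pi (uIcc a b) := hC2.continuousOn.mono huv
      have ibp1 : ∫ x in a..b, F x * deriv (deriv g) x
          = F b * deriv g b - F a * deriv g a - ∫ x in a..b, deriv F x * deriv g x :=
        intervalIntegral.integral_mul_deriv_eq_deriv_mul
          (fun x hx => hdF x (huv hx)) (fun x _ => hdg' x)
          hcF'.intervalIntegrable hcg''.continuousOn.intervalIntegrable
      have ibp2 : ∫ x in a..b, deriv F x * deriv g x
          = deriv F b * g b - deriv F a * g a - ∫ x in a..b, deriv (deriv F) x * g x :=
        intervalIntegral.integral_mul_deriv_eq_deriv_mul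
          (fun x hx => hdF' x (huv hx)) (fun x _ => hdg x)
          hcF''.intervalIntegrable (hg1'.differentiable one_ne_zero).continuous.continuousOn.intervalIntegrable
      have ibp3 : ∫ x in a..b, M x * deriv g x
          = M b * g b - M a * g a - ∫ x in a..b, deriv M x * g x :=
        intervalIntegral.integral_mul_deriv_eq_deriv_mul
          (fun x hx => hdM x (huv hx)) (fun x _ => hdg x)
          hcM'.intervalIntegrable (hg1'.differentiable one_ne_zero).continuous.continuousOn.intervalIntegrable
      have hga : g a = 0 := hgz a (by simp)
      have hgb : g b = 0 := hgz b (by simp)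
      have hg'a : deriv g a = 0 := hg'z a (by simp)
      have hg'b : deriv g b = 0 := hg'z b (by simp)
      have hcg : Continuous g := hg.continuous
      have split : ∫ x in a..b, (F x * deriv (deriv g) x + M x * deriv g x - lam * pi x * g x)
          = (∫ x in a..b, F x * deriv (deriv g) x) + (∫ x in a..b, M x * deriv g x)
            - ∫ x in a..b, lam * pi x * g x := by
        rw [intervalIntegral.integral_sub, intervalIntegral.integral_add]
        · exact (hcF.mul hcg''.continuousOn).intervalIntegrable
        · exact (hcM.mul hg1'.continuous.continuousOn).intervalIntegrable
        · exact ((hcF.mul hcg''.continuousOn).add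
            (hcM.mul hg1'.continuous.continuousOn)).intervalIntegrable
        · exact ((continuousOn_const.mul hcpi).mul hcg.continuousOn).intervalIntegrable
      have split2 : ∫ x in a..b, g x * h x
          = (∫ x in a..b, deriv (deriv F) x * g x) - (∫ x in a..b, deriv M x * g x)
            - ∫ x in a..b, lam * pi x * g x := by
        rw [← intervalIntegral.integral_sub, ← intervalIntegral.integral_sub]
        · apply intervalIntegral.integral_congr
          intro x _
          simp only [hhdef]; ring
        · exact ((hcF''.mul hcg.continuousOn).sub (hcM'.mul hcg.continuousOn)).intervalIntegrable
        · exact ((continuousOn_const.mul hcpi).mul hcg.continuousOn).intervalIntegrable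
        · exact (hcF''.mul hcg.continuousOn).intervalIntegrable
        · exact (hcM'.mul hcg.continuousOn).intervalIntegrable
      have eqT : ∫ x in a..b, (F x * deriv (deriv g) x + M x * deriv g x - lam * pi x * g x)
          = ∫ x in a..b, g x * h x := by
        rw [split, split2, ibp1, ibp2, ibp3, hga, hgb, hg'a, hg'b]
        ring
      -- now relate set integrals over Ioo 0 1 with interval integrals over a..b
      have hIoosub : Ioo a b ⊆ Ioo (0:ℝ) 1 := fun x hx => hIccsub ⟨hx.1.le, hx.2.le⟩
      have conv1 : ∫ x in Ioo (0:ℝ) 1, g x • h x = ∫ x in a..b, g x * h x := by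
        rw [intervalIntegral.integral_of_le hab.le, integral_Ioc_eq_integral_Ioo]
        simp only [smul_eq_mul]
        exact setIntegral_eq_of_subset_of_forall_diff_eq_zero measurableSet_Ioo hIoosub
          (fun x hx => by rw [hgz x hx.2, zero_mul])
      have conv2 : (∫ p in Ioo (0:ℝ) 1,
            (1 / 2 * v p * pi p * deriv (deriv g) p + mu p * pi p * deriv g p
              - lam * pi p * g p))
          = ∫ x in a..b, (F x * deriv (deriv g) x + M x * deriv g x - lam * pi x * g x) := by
        rw [intervalIntegral.integral_of_le hab.le, integral_Ioc_eq_integral_Ioo]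
        exact setIntegral_eq_of_subset_of_forall_diff_eq_zero measurableSet_Ioo hIoosub
          (fun x hx => by rw [hgz x hx.2, hg'z x hx.2, hg''z x hx.2]; ring)
      rw [conv1, ← eqT, ← conv2]
      exact hzero g hg hgsupp hgsub
  intro p hp
  have hcp : ContinuousAt h p := hcont.continuousAt (isOpen_Ioo.mem_nhds hp)
  by_contra hne0
  have hne0' : h p ≠ 0 := hne0
  have hev : ∀ᶠ x in 𝓝 p, h x ≠ 0 := hcp.eventually_ne hne0'
  obtain ⟨ε, εpos, hball⟩ := Metric.eventually_nhds_iff.mp hev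
  set ε' := min ε (min p (1 - p)) with hε'
  have hε'pos : 0 < ε' := lt_min εpos (lt_min hp.1 (by linarith [hp.2]))
  have hsubI : Ioo (p - ε') (p + ε') ⊆ Ioo (0:ℝ) 1 := by
    intro x hx
    have h1 : ε' ≤ p := (min_le_right _ _).trans (min_le_left _ _)
    have h2 : ε' ≤ 1 - p := (min_le_right _ _).trans (min_le_right _ _)
    exact ⟨by linarith [hx.1], by linarith [hx.2]⟩
  have hsubN : Ioo (p - ε') (p + ε') ⊆ {x | ¬ (x ∈ Ioo (0:ℝ) 1 → h x = 0)} := by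
    intro x hx
    have hx1 : x ∈ Ioo (0:ℝ) 1 := hsubI hx
    have hd : dist x p < ε := by
      rw [Real.dist_eq, abs_lt]
      constructor
      · have : ε' ≤ ε := min_le_left _ _
        linarith [hx.1]
      · have : ε' ≤ ε := min_le_left _ _
        linarith [hx.2]
    exact fun hcontr => hball hd (hcontr hx1)
  have hnull : volume.restrict (Ioo (0:ℝ) 1) (Ioo (p - ε') (p + ε')) = 0 :=
    measure_mono_null hsubN (ae_iff.mp hae)
  rw [Measure.restrict_apply measurableSet_Ioo,
    inter_eq_self_of_subset_left hsubI, Real.volume_Ioo] at hnull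
  have : (0:ℝ) < (p + ε') - (p - ε') := by linarith
  rw [ENNReal.ofReal_eq_zero] at hnull
  linarith

lemma repr_lemma (lam : ℝ) (v mu pi : ℝ → ℝ)
    (hv : ∀ p ∈ Icc (0:ℝ) 1, ContDiffAt ℝ 2 v p)
    (hmu : ∀ p ∈ Icc (0:ℝ) 1, ContDiffAt ℝ 2 mu p)
    (hC2 : ContDiffOn ℝ 2 pi (Ioo (0:ℝ) 1))
    (hint : IntegrableOn pi (Ioo (0:ℝ) 1))
    (hODE : ∀ p ∈ Ioo (0:ℝ) 1,
      deriv (deriv fun q => 1 / 2 * v q * pi q) p - deriv (fun q => mu q * pi q) p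
        - lam * pi p = 0) :
    ∃ K W : ℝ → ℝ, ContinuousOn K (Icc (0:ℝ) 1) ∧ ContinuousOn W (Icc (0:ℝ) 1) ∧
      (∀ p ∈ Ioo (0:ℝ) 1, mu p * pi p - deriv (fun q => 1 / 2 * v q * pi q) p = K p) ∧
      (∀ p ∈ Ioo (0:ℝ) 1, v p * pi p = W p) ∧
      K 1 = K 0 - lam * ∫ t in Ioc (0:ℝ) 1, pi t := by
  set F : ℝ → ℝ := fun q => 1 / 2 * v q * pi q with hFdef
  set M : ℝ → ℝ := fun q => mu q * pi q with hMdef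
  have hsub : Ioo (0:ℝ) 1 ⊆ Icc 0 1 := Ioo_subset_Icc_self
  have hhalf : (1/2 : ℝ) ∈ Ioo (0:ℝ) 1 := by norm_num
  have hv2 : ContDiffOn ℝ 2 v (Ioo (0:ℝ) 1) := fun p hp => (hv p (hsub hp)).contDiffWithinAt
  have hmu2 : ContDiffOn ℝ 2 mu (Ioo (0:ℝ) 1) := fun p hp => (hmu p (hsub hp)).contDiffWithinAt
  have hF2 : ContDiffOn ℝ 2 F (Ioo (0:ℝ) 1) := (contDiffOn_const.mul hv2).mul hC2
  have hM2 : ContDiffOn ℝ 2 M (Ioo (0:ℝ) 1) := hmu2.mul hC2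
  have hF1 : ContDiffOn ℝ 1 (deriv F) (Ioo (0:ℝ) 1) :=
    hF2.deriv_of_isOpen isOpen_Ioo (by norm_num)
  have hdF : ∀ p ∈ Ioo (0:ℝ) 1, HasDerivAt F (deriv F p) p := fun p hp =>
    ((hF2.differentiableOn two_ne_zero).differentiableAt (isOpen_Ioo.mem_nhds hp)).hasDerivAt
  have hdF' : ∀ p ∈ Ioo (0:ℝ) 1, HasDerivAt (deriv F) (deriv (deriv F) p) p := fun p hp =>
    ((hF1.differentiableOn one_ne_zero).differentiableAt (isOpen_Ioo.mem_nhds hp)).hasDerivAt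
  have hdM : ∀ p ∈ Ioo (0:ℝ) 1, HasDerivAt M (deriv M p) p := fun p hp =>
    ((hM2.differentiableOn two_ne_zero).differentiableAt (isOpen_Ioo.mem_nhds hp)).hasDerivAt
  set J : ℝ → ℝ := fun p => M p - deriv F p with hJdef
  have hdJ : ∀ p ∈ Ioo (0:ℝ) 1, HasDerivAt J (-(lam * pi p)) p := by
    intro p hp
    have h1 := (hdM p hp).sub (hdF' p hp)
    have h2 := hODE p hp
    have : deriv M p - deriv (deriv F) p = -(lam * pi p) := by linarith
    rwa [this] at h1
  have hintIcc : IntegrableOn pi (Icc (0:ℝ) 1) := by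
    rwa [integrableOn_Icc_iff_integrableOn_Ioo]
  have hII : ∀ x y : ℝ, x ∈ Icc (0:ℝ) 1 → y ∈ Icc (0:ℝ) 1 → IntervalIntegrable pi volume x y := by
    intro x y hx hy
    apply (hintIcc.mono_set _).intervalIntegrable
    exact (ordConnected_Icc.uIcc_subset hx hy)
  set P : ℝ → ℝ := fun x => ∫ t in Ioc (0:ℝ) x, pi t with hPdef
  have hPc : ContinuousOn P (Icc (0:ℝ) 1) := intervalIntegral.continuousOn_primitive hintIcc
  have hPint : ∀ x ∈ Icc (0:ℝ) 1, ∫ t in (0:ℝ)..x, pi t = P x := by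
    intro x hx
    rw [intervalIntegral.integral_of_le hx.1]
  -- J = K on Ioo
  set K : ℝ → ℝ := fun x => J (1/2) + lam * P (1/2) - lam * P x with hKdef
  have hKc : ContinuousOn K (Icc (0:ℝ) 1) :=
    (continuousOn_const.sub (continuousOn_const.mul hPc))
  have hJK : ∀ p ∈ Ioo (0:ℝ) 1, J p = K p := by
    intro p hp
    have huIcc : uIcc (1/2 : ℝ) p ⊆ Ioo (0:ℝ) 1 := ordConnected_Ioo.uIcc_subset hhalf hp
    have hftc : ∫ t in (1/2 : ℝ)..p, -(lam * pi t) = J p - J (1/2) := by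
      apply intervalIntegral.integral_eq_sub_of_hasDerivAt
      · exact fun x hx => hdJ x (huIcc hx)
      · exact ((hII (1/2) p (hsub hhalf) (hsub hp)).const_mul lam).neg
    have hadd : (∫ t in (0:ℝ)..(1/2:ℝ), pi t) + ∫ t in (1/2:ℝ)..p, pi t
        = ∫ t in (0:ℝ)..p, pi t :=
      intervalIntegral.integral_add_adjacent_intervals
        (hII 0 (1/2) (left_mem_Icc.mpr zero_le_one) (hsub hhalf))
        (hII (1/2) p (hsub hhalf) (hsub hp))
    have h2 : ∫ t in (1/2 : ℝ)..p, -(lam * pi t) = -(lam * (P p - P (1/2))) := by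
      rw [intervalIntegral.integral_neg, intervalIntegral.integral_const_mul]
      have : ∫ t in (1/2:ℝ)..p, pi t = P p - P (1/2) := by
        rw [← hPint p (hsub hp), ← hPint (1/2) (hsub hhalf), ← hadd]; ring
      rw [this]
    rw [h2] at hftc
    simp only [hKdef]
    linarith
  -- W
  have hcmu : ContinuousOn mu (Icc (0:ℝ) 1) := fun p hp => (hmu p hp).continuousAt.continuousWithinAt
  have hMint : IntegrableOn M (Icc (0:ℝ) 1) := by
    obtain ⟨C, hC⟩ := isCompact_Icc.exists_bound_of_continuousOn hcmu
    apply Integrable.bdd_mul (c := C) hintIcc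
    · exact hcmu.aestronglyMeasurable measurableSet_Icc
    · exact (ae_restrict_iff' measurableSet_Icc).mpr (Eventually.of_forall fun x hx => hC x hx)
  have hKint : IntegrableOn K (Icc (0:ℝ) 1) := hKc.integrableOn_compact isCompact_Icc
  set G : ℝ → ℝ := fun t => 2 * M t - 2 * K t with hGdef
  have hGint : IntegrableOn G (Icc (0:ℝ) 1) := (hMint.const_mul 2).sub (hKint.const_mul 2)
  have hGII : ∀ x y : ℝ, x ∈ Icc (0:ℝ) 1 → y ∈ Icc (0:ℝ) 1 → IntervalIntegrable G volume x y := by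
    intro x y hx hy
    exact (hGint.mono_set (ordConnected_Icc.uIcc_subset hx hy)).intervalIntegrable
  set R : ℝ → ℝ := fun x => ∫ t in Ioc (0:ℝ) x, G t with hRdef
  have hRc : ContinuousOn R (Icc (0:ℝ) 1) := intervalIntegral.continuousOn_primitive hGint
  have hRint : ∀ x ∈ Icc (0:ℝ) 1, ∫ t in (0:ℝ)..x, G t = R x := by
    intro x hx
    rw [intervalIntegral.integral_of_le hx.1]
  set W : ℝ → ℝ := fun x => v (1/2) * pi (1/2) + (R x - R (1/2)) with hWdef
  have hWc : ContinuousOn W (Icc (0:ℝ) 1) :=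
    continuousOn_const.add (hRc.sub continuousOn_const)
  have hdVP : ∀ p ∈ Ioo (0:ℝ) 1, HasDerivAt (fun q => v q * pi q) (G p) p := by
    intro p hp
    have h1 : HasDerivAt (fun q => 2 * F q) (2 * deriv F p) p := (hdF p hp).const_mul 2
    have h2 : (fun q => 2 * F q) = fun q => v q * pi q := by
      funext q; simp only [hFdef]; ring
    have h3 : deriv F p = M p - K p := by
      have := hJK p hp
      simp only [hJdef] at this
      linarith
    rw [h2, h3] at h1
    have : 2 * (M p - K p) = G p := by simp only [hGdef]; ring
    rwa [this] at h1
  have hVW : ∀ p ∈ Ioo (0:ℝ) 1, v p * pi p = W p := by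
    intro p hp
    have huIcc : uIcc (1/2 : ℝ) p ⊆ Ioo (0:ℝ) 1 := ordConnected_Ioo.uIcc_subset hhalf hp
    have hftc : ∫ t in (1/2 : ℝ)..p, G t = v p * pi p - v (1/2) * pi (1/2) := by
      apply intervalIntegral.integral_eq_sub_of_hasDerivAt
      · exact fun x hx => hdVP x (huIcc hx)
      · exact hGII (1/2) p (hsub hhalf) (hsub hp)
    have hadd : (∫ t in (0:ℝ)..(1/2:ℝ), G t) + ∫ t in (1/2:ℝ)..p, G t
        = ∫ t in (0:ℝ)..p, G t :=
      intervalIntegral.integral_add_adjacent_intervals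
        (hGII 0 (1/2) (left_mem_Icc.mpr zero_le_one) (hsub hhalf))
        (hGII (1/2) p (hsub hhalf) (hsub hp))
    have h2 : ∫ t in (1/2:ℝ)..p, G t = R p - R (1/2) := by
      rw [← hRint p (hsub hp), ← hRint (1/2) (hsub hhalf), ← hadd]; ring
    rw [h2] at hftc
    simp only [hWdef]
    linarith
  refine ⟨K, W, hKc, hWc, fun p hp => hJK p hp, hVW, ?_⟩
  simp only [hKdef, hPdef]
  have : ∫ t in Ioc (0:ℝ) 0, pi t = 0 := by simp
  rw [this]
  ring

lemma tendsto_W_zero (W : ℝ → ℝ) (f : ℝ → ℝ) (c : ℝ) (hc : c = 0 ∨ c = 1)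
    (hWc : ContinuousOn W (Icc (0:ℝ) 1))
    (hfW : ∀ p ∈ Ioo (0:ℝ) 1, f p = W p) :
    Tendsto f (𝓝[Ioo (0:ℝ) 1] c) (𝓝 (W c)) := by
  have hmem : c ∈ Icc (0:ℝ) 1 := by rcases hc with rfl | rfl <;> norm_num
  have h1 : Tendsto W (𝓝[Ioo (0:ℝ) 1] c) (𝓝 (W c)) :=
    (hWc.continuousWithinAt hmem).mono_left (nhdsWithin_mono _ Ioo_subset_Icc_self)
  apply h1.congr'
  filter_upwards [eventually_mem_nhdsWithin] with x hx using (hfW x hx).symm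

lemma nebot_zero : (𝓝[Ioo (0:ℝ) 1] 0).NeBot := by
  rw [nhdsWithin_Ioo_eq_nhdsGT zero_lt_one]
  infer_instance

lemma nebot_one : (𝓝[Ioo (0:ℝ) 1] 1).NeBot := by
  rw [nhdsWithin_Ioo_eq_nhdsLT zero_lt_one]
  infer_instance

lemma W_zero_at_zero (v pi W : ℝ → ℝ)
    (hWc : ContinuousOn W (Icc (0:ℝ) 1))
    (hVW : ∀ p ∈ Ioo (0:ℝ) 1, v p * pi p = W p)
    (hvd : HasDerivAt v (deriv v 0) 0) (hv0 : v 0 = 0)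
    (hpos : ∀ p ∈ Ioo (0:ℝ) 1, 0 < pi p) (hvpos : ∀ p ∈ Ioo (0:ℝ) 1, 0 < v p)
    (hint : IntegrableOn pi (Ioo (0:ℝ) 1)) : W 0 = 0 := by
  haveI := nebot_zero
  have htend : Tendsto (fun p => v p * pi p) (𝓝[Ioo (0:ℝ) 1] 0) (𝓝 (W 0)) :=
    tendsto_W_zero W _ 0 (Or.inl rfl) hWc hVW
  have hL0 : 0 ≤ W 0 := by
    apply ge_of_tendsto htend
    filter_upwards [eventually_mem_nhdsWithin] with x hx
    exact (mul_pos (hvpos x hx) (hpos x hx)).le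
  rcases eq_or_lt_of_le hL0 with h | hL
  · exact h.symm
  exfalso
  set L := W 0 with hLdef
  set C := |deriv v 0| + 1 with hCdef
  have hCpos : 0 < C := by positivity
  -- slope bound
  have hslope : Tendsto (fun x => v x / x) (𝓝[≠] (0:ℝ)) (𝓝 (deriv v 0)) := by
    have := hasDerivAt_iff_tendsto_slope.mp hvd
    apply this.congr'
    filter_upwards [self_mem_nhdsWithin] with x hx
    simp [slope_def_field, hv0]
  have hslope' : Tendsto (fun x => v x / x) (𝓝[Ioo (0:ℝ) 1] 0) (𝓝 (deriv v 0)) :=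
    hslope.mono_left (nhdsWithin_mono _ (fun x hx => ne_of_gt hx.1))
  have hev1 : ∀ᶠ x in 𝓝[Ioo (0:ℝ) 1] 0, v x / x < C := by
    apply Filter.Tendsto.eventually_lt_const _ hslope'
    rw [hCdef]
    have := le_abs_self (deriv v 0)
    linarith
  have hev2 : ∀ᶠ x in 𝓝[Ioo (0:ℝ) 1] 0, L / 2 < v x * pi x :=
    htend.eventually_const_lt (by linarith)
  have hev : ∀ᶠ x in 𝓝[Ioo (0:ℝ) 1] 0, (L / (2 * C)) * x⁻¹ < pi x := by
    filter_upwards [hev1, hev2, eventually_mem_nhdsWithin] with x h1 h2 hx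
    have hx0 : 0 < x := hx.1
    have hvx : 0 < v x := hvpos x hx
    have hvxC : v x < C * x := by
      rw [div_lt_iff₀ hx0] at h1; linarith
    have hpix : 0 < pi x := hpos x hx
    have key : pi x * (C * x) > L / 2 :=
      lt_of_lt_of_le h2 (by nlinarith)
    rw [gt_iff_lt, ← div_lt_iff₀ (by positivity)] at key
    have hxne : x ≠ 0 := ne_of_gt hx0
    have hCne : C ≠ 0 := ne_of_gt hCpos
    calc (L / (2 * C)) * x⁻¹ = L / 2 / (C * x) := by
          field_simp
    _ < pi x := key
  rw [eventually_nhdsWithin_iff, Metric.eventually_nhds_iff] at hev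
  obtain ⟨ε, hε, hball⟩ := hev
  set δ := min ε (1/2 : ℝ) with hδdef
  have hδpos : 0 < δ := lt_min hε (by norm_num)
  have hδ1 : δ ≤ 1/2 := min_le_right _ _
  have hsubδ : Ioo (0:ℝ) δ ⊆ Ioo (0:ℝ) 1 := Ioo_subset_Ioo le_rfl (by linarith)
  have hbound : ∀ x ∈ Ioo (0:ℝ) δ, (L / (2 * C)) * x⁻¹ < pi x := by
    intro x hx
    refine hball ?_ (hsubδ hx)
    rw [Real.dist_eq, sub_zero, abs_of_pos hx.1]
    exact lt_of_lt_of_le hx.2 (min_le_left _ _)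
  -- integrability of inverse: contradiction
  have hcpos : 0 < L / (2 * C) := by positivity
  have hInt : IntegrableOn (fun x => (L / (2 * C)) * x⁻¹) (Ioo (0:ℝ) δ) := by
    apply Integrable.mono' (hint.mono_set hsubδ)
    · exact ((measurable_id'.inv).const_mul (L / (2 * C))).aestronglyMeasurable
    · rw [ae_restrict_iff' measurableSet_Ioo]
      filter_upwards with x hx
      have hx0 : (0:ℝ) < x := hx.1
      rw [Real.norm_eq_abs, abs_of_pos (by positivity : (0:ℝ) < (L / (2 * C)) * x⁻¹)]
      exact (hbound x hx).le
  have hInt2 : IntegrableOn (fun x => x⁻¹) (Ioo (0:ℝ) δ) := by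
    have h2 := hInt.const_mul (2 * C / L)
    refine IntegrableOn.congr_fun h2 (fun x hx => ?_) measurableSet_Ioo
    have hxne : x ≠ 0 := ne_of_gt hx.1
    have hCne : C ≠ 0 := ne_of_gt hCpos
    have hLne : L ≠ 0 := ne_of_gt hL
    field_simp
  have : IntervalIntegrable (fun x => x⁻¹) volume 0 δ := by
    rw [intervalIntegrable_iff_integrableOn_Ioo_of_le hδpos.le]
    exact hInt2
  rw [intervalIntegrable_inv_iff] at this
  rcases this with h | h
  · exact hδpos.ne h
  · exact h left_mem_uIcc

lemma W_zero_at_one (v pi W : ℝ → ℝ)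
    (hWc : ContinuousOn W (Icc (0:ℝ) 1))
    (hVW : ∀ p ∈ Ioo (0:ℝ) 1, v p * pi p = W p)
    (hvd : HasDerivAt v (deriv v 1) 1) (hv1 : v 1 = 0)
    (hpos : ∀ p ∈ Ioo (0:ℝ) 1, 0 < pi p) (hvpos : ∀ p ∈ Ioo (0:ℝ) 1, 0 < v p)
    (hint : IntegrableOn pi (Ioo (0:ℝ) 1)) : W 1 = 0 := by
  haveI := nebot_one
  have htend : Tendsto (fun p => v p * pi p) (𝓝[Ioo (0:ℝ) 1] 1) (𝓝 (W 1)) :=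
    tendsto_W_zero W _ 1 (Or.inr rfl) hWc hVW
  have hL0 : 0 ≤ W 1 := by
    apply ge_of_tendsto htend
    filter_upwards [eventually_mem_nhdsWithin] with x hx
    exact (mul_pos (hvpos x hx) (hpos x hx)).le
  rcases eq_or_lt_of_le hL0 with h | hL
  · exact h.symm
  exfalso
  set L := W 1 with hLdef
  set C := |deriv v 1| + 1 with hCdef
  have hCpos : 0 < C := by positivity
  have hslope : Tendsto (fun x => v x / (x - 1)) (𝓝[≠] (1:ℝ)) (𝓝 (deriv v 1)) := by
    have := hasDerivAt_iff_tendsto_slope.mp hvd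
    apply this.congr'
    filter_upwards [self_mem_nhdsWithin] with x hx
    simp [slope_def_field, hv1]
  have hslope' : Tendsto (fun x => v x / (x - 1)) (𝓝[Ioo (0:ℝ) 1] 1) (𝓝 (deriv v 1)) :=
    hslope.mono_left (nhdsWithin_mono _ (fun x hx => ne_of_lt hx.2))
  have hev1 : ∀ᶠ x in 𝓝[Ioo (0:ℝ) 1] 1, -C < v x / (x - 1) := by
    apply hslope'.eventually_const_lt
    rw [hCdef]
    have := neg_abs_le (deriv v 1)
    linarith
  have hev2 : ∀ᶠ x in 𝓝[Ioo (0:ℝ) 1] 1, L / 2 < v x * pi x :=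
    htend.eventually_const_lt (by linarith)
  have hev : ∀ᶠ x in 𝓝[Ioo (0:ℝ) 1] 1, (L / (2 * C)) * (1 - x)⁻¹ < pi x := by
    filter_upwards [hev1, hev2, eventually_mem_nhdsWithin] with x h1 h2 hx
    have hx1 : x < 1 := hx.2
    have hd : x - 1 < 0 := by linarith
    have hvx : 0 < v x := hvpos x hx
    have hvxC : v x < C * (1 - x) := by
      rw [lt_div_iff_of_neg hd] at h1
      nlinarith
    have hpix : 0 < pi x := hpos x hx
    have key : pi x * (C * (1 - x)) > L / 2 :=
      lt_of_lt_of_le h2 (by nlinarith)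
    rw [gt_iff_lt, ← div_lt_iff₀ (by nlinarith : (0:ℝ) < C * (1 - x))] at key
    have hxne : (1:ℝ) - x ≠ 0 := by linarith
    have hCne : C ≠ 0 := ne_of_gt hCpos
    calc (L / (2 * C)) * (1 - x)⁻¹ = L / 2 / (C * (1 - x)) := by
          field_simp
    _ < pi x := key
  rw [eventually_nhdsWithin_iff, Metric.eventually_nhds_iff] at hev
  obtain ⟨ε, hε, hball⟩ := hev
  set δ := max (1 - ε) (1/2 : ℝ) with hδdef
  have hδ1 : δ < 1 := by
    rw [hδdef, max_lt_iff]
    constructor <;> [linarith; norm_num]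
  have hδhalf : (1/2:ℝ) ≤ δ := le_max_right _ _
  have hsubδ : Ioo δ 1 ⊆ Ioo (0:ℝ) 1 := Ioo_subset_Ioo (by linarith) le_rfl
  have hbound : ∀ x ∈ Ioo δ 1, (L / (2 * C)) * (1 - x)⁻¹ < pi x := by
    intro x hx
    refine hball ?_ (hsubδ hx)
    rw [Real.dist_eq, abs_of_neg (by linarith [hx.2] : x - 1 < 0)]
    have : 1 - ε ≤ δ := le_max_left _ _
    have := hx.1
    linarith
  have hInt : IntegrableOn (fun x => (L / (2 * C)) * (1 - x)⁻¹) (Ioo δ 1) := by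
    apply Integrable.mono' (hint.mono_set hsubδ)
    · exact (((measurable_const.sub measurable_id').inv).const_mul
        (L / (2 * C))).aestronglyMeasurable
    · rw [ae_restrict_iff' measurableSet_Ioo]
      filter_upwards with x hx
      have hx0 : (0:ℝ) < 1 - x := by linarith [hx.2]
      rw [Real.norm_eq_abs, abs_of_pos (by positivity : (0:ℝ) < (L / (2 * C)) * (1 - x)⁻¹)]
      exact (hbound x hx).le
  have hInt2 : IntegrableOn (fun x => (x - 1)⁻¹) (Ioo δ 1) := by
    have h2 := (hInt.const_mul (2 * C / L)).neg
    refine IntegrableOn.congr_fun h2 (fun x hx => ?_) measurableSet_Ioo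
    have hxne : (1:ℝ) - x ≠ 0 := by have := hx.2; intro hc; linarith [hx.2, sub_eq_zero.mp hc]
    have hCne : C ≠ 0 := ne_of_gt hCpos
    have hLne : L ≠ 0 := ne_of_gt hL
    simp only [Pi.neg_apply]
    rw [show x - 1 = -(1 - x) by ring, inv_neg]
    field_simp
  have : IntervalIntegrable (fun x => (x - 1)⁻¹) volume δ 1 := by
    rw [intervalIntegrable_iff_integrableOn_Ioo_of_le hδ1.le]
    exact hInt2
  rw [intervalIntegrable_sub_inv_iff] at this
  rcases this with h | h
  · exact hδ1.ne h
  · exact h right_mem_uIcc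

lemma contDiff_two_deriv_facts (phi : ℝ → ℝ) (hphi : ContDiff ℝ 2 phi) :
    (∀ x, HasDerivAt phi (deriv phi x) x) ∧ (∀ x, HasDerivAt (deriv phi) (deriv (deriv phi) x) x)
      ∧ Continuous (deriv phi) ∧ Continuous (deriv (deriv phi)) := by
  have hphi1 : ContDiff ℝ 1 (deriv phi) := by
    have := (contDiff_succ_iff_deriv (n := 1)).mp (by norm_num at hphi ⊢; exact hphi)
    exact this.2.2
  have hc2 : Continuous (deriv (deriv phi)) := by
    have := (contDiff_succ_iff_deriv (n := 0)).mp (by norm_num at hphi1 ⊢; exact hphi1)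
    exact this.2.2.continuous
  exact ⟨fun x => (hphi.differentiable two_ne_zero).differentiableAt.hasDerivAt,
    fun x => (hphi1.differentiable one_ne_zero).differentiableAt.hasDerivAt,
    hphi1.continuous, hc2⟩

lemma ibp_identity (lam : ℝ) (v mu w0 pi : ℝ → ℝ)
    (hv : ∀ p ∈ Icc (0:ℝ) 1, ContDiffAt ℝ 2 v p)
    (hmu : ∀ p ∈ Icc (0:ℝ) 1, ContDiffAt ℝ 2 mu p)
    (hw0c : ContinuousOn w0 (Icc (0:ℝ) 1))
    (hC2 : ContDiffOn ℝ 2 pi (Ioo (0:ℝ) 1))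
    (hODE : ∀ p ∈ Ioo (0:ℝ) 1,
      deriv (deriv fun q => 1 / 2 * v q * pi q) p - deriv (fun q => mu q * pi q) p
        - lam * pi p = 0)
    (phi : ℝ → ℝ) (hphi : ContDiff ℝ 2 phi)
    (a b : ℝ) (ha : 0 < a) (hab : a < b) (hb : b < 1) :
    ∫ x in Ioo a b, fwdGen lam v mu w0 phi x * pi x
      = (1 / 2 * v b * pi b) * deriv phi b - (1 / 2 * v a * pi a) * deriv phi a
        + (mu b * pi b - deriv (fun q => 1 / 2 * v q * pi q) b) * phi b
        - (mu a * pi a - deriv (fun q => 1 / 2 * v q * pi q) a) * phi a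
        + lam * phi 0 * (∫ x in Ioo a b, w0 x * pi x)
        + lam * phi 1 * ∫ x in Ioo a b, (1 - w0 x) * pi x := by
  set F : ℝ → ℝ := fun q => 1 / 2 * v q * pi q with hFdef
  set M : ℝ → ℝ := fun q => mu q * pi q with hMdef
  have hsub : Ioo (0:ℝ) 1 ⊆ Icc 0 1 := Ioo_subset_Icc_self
  have hv2 : ContDiffOn ℝ 2 v (Ioo (0:ℝ) 1) := fun p hp => (hv p (hsub hp)).contDiffWithinAt
  have hmu2 : ContDiffOn ℝ 2 mu (Ioo (0:ℝ) 1) := fun p hp => (hmu p (hsub hp)).contDiffWithinAt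
  have hF2 : ContDiffOn ℝ 2 F (Ioo (0:ℝ) 1) := (contDiffOn_const.mul hv2).mul hC2
  have hM2 : ContDiffOn ℝ 2 M (Ioo (0:ℝ) 1) := hmu2.mul hC2
  have hF1 : ContDiffOn ℝ 1 (deriv F) (Ioo (0:ℝ) 1) :=
    hF2.deriv_of_isOpen isOpen_Ioo (by norm_num)
  have hdF : ∀ p ∈ Ioo (0:ℝ) 1, HasDerivAt F (deriv F p) p := fun p hp =>
    ((hF2.differentiableOn two_ne_zero).differentiableAt (isOpen_Ioo.mem_nhds hp)).hasDerivAt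
  have hdF' : ∀ p ∈ Ioo (0:ℝ) 1, HasDerivAt (deriv F) (deriv (deriv F) p) p := fun p hp =>
    ((hF1.differentiableOn one_ne_zero).differentiableAt (isOpen_Ioo.mem_nhds hp)).hasDerivAt
  have hdM : ∀ p ∈ Ioo (0:ℝ) 1, HasDerivAt M (deriv M p) p := fun p hp =>
    ((hM2.differentiableOn two_ne_zero).differentiableAt (isOpen_Ioo.mem_nhds hp)).hasDerivAt
  set J : ℝ → ℝ := fun p => M p - deriv F p with hJdef
  have hdJ : ∀ p ∈ Ioo (0:ℝ) 1, HasDerivAt J (-(lam * pi p)) p := by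
    intro p hp
    have h1 := (hdM p hp).sub (hdF' p hp)
    have h2 := hODE p hp
    have h3 : deriv M p - deriv (deriv F) p = -(lam * pi p) := by linarith
    rwa [h3] at h1
  obtain ⟨hdphi, hdphi', hcphi', hcphi''⟩ := contDiff_two_deriv_facts phi hphi
  have hIccsub : Icc a b ⊆ Ioo (0:ℝ) 1 := fun x hx =>
    ⟨lt_of_lt_of_le ha hx.1, lt_of_le_of_lt hx.2 hb⟩
  have huv : uIcc a b ⊆ Ioo (0:ℝ) 1 := by rw [uIcc_of_le hab.le]; exact hIccsub
  have hcF : ContinuousOn F (uIcc a b) := hF2.continuousOn.mono huv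
  have hcF' : ContinuousOn (deriv F) (uIcc a b) := hF1.continuousOn.mono huv
  have hcM : ContinuousOn M (uIcc a b) := hM2.continuousOn.mono huv
  have hcpi : ContinuousOn pi (uIcc a b) := hC2.continuousOn.mono huv
  have hcw0 : ContinuousOn w0 (uIcc a b) := hw0c.mono (huv.trans hsub)
  have hcJ : ContinuousOn J (uIcc a b) := hcM.sub hcF'
  -- the five interval integrability facts
  have i1 : IntervalIntegrable (fun x => F x * deriv (deriv phi) x) volume a b :=
    (hcF.mul hcphi''.continuousOn).intervalIntegrable
  have i2 : IntervalIntegrable (fun x => M x * deriv phi x) volume a b :=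
    (hcM.mul hcphi'.continuousOn).intervalIntegrable
  have i3 : IntervalIntegrable (fun x => lam * phi 0 * (w0 x * pi x)) volume a b :=
    (continuousOn_const.mul (hcw0.mul hcpi)).intervalIntegrable
  have i4 : IntervalIntegrable (fun x => lam * phi 1 * ((1 - w0 x) * pi x)) volume a b :=
    (continuousOn_const.mul ((continuousOn_const.sub hcw0).mul hcpi)).intervalIntegrable
  have i5 : IntervalIntegrable (fun x => lam * (pi x * phi x)) volume a b :=
    (continuousOn_const.mul (hcpi.mul hphi.continuous.continuousOn)).intervalIntegrable
  have i6 : IntervalIntegrable (fun x => deriv F x * deriv phi x) volume a b :=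
    (hcF'.mul hcphi'.continuousOn).intervalIntegrable
  -- IBP
  have ibpA : ∫ x in a..b, F x * deriv (deriv phi) x
      = F b * deriv phi b - F a * deriv phi a - ∫ x in a..b, deriv F x * deriv phi x :=
    intervalIntegral.integral_mul_deriv_eq_deriv_mul
      (fun x hx => hdF x (huv hx)) (fun x _ => hdphi' x)
      hcF'.intervalIntegrable hcphi''.continuousOn.intervalIntegrable
  have ibpB : ∫ x in a..b, J x * deriv phi x
      = J b * phi b - J a * phi a - ∫ x in a..b, (-(lam * pi x)) * phi x :=
    intervalIntegral.integral_mul_deriv_eq_deriv_mul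
      (fun x hx => hdJ x (huv hx)) (fun x _ => hdphi x)
      ((hcpi.intervalIntegrable.const_mul lam).neg)
      hcphi'.continuousOn.intervalIntegrable
  have eq4 : ∫ x in a..b, J x * deriv phi x
      = J b * phi b - J a * phi a + lam * ∫ x in a..b, pi x * phi x := by
    rw [ibpB]
    have : ∫ x in a..b, (-(lam * pi x)) * phi x = -(lam * ∫ x in a..b, pi x * phi x) := by
      rw [← intervalIntegral.integral_const_mul, ← intervalIntegral.integral_neg]
      apply intervalIntegral.integral_congr
      intro x _
      ring
    rw [this]
    ring
  have eq3 : ∫ x in a..b, J x * deriv phi x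
      = (∫ x in a..b, M x * deriv phi x) - ∫ x in a..b, deriv F x * deriv phi x := by
    rw [← intervalIntegral.integral_sub i2 i6]
    apply intervalIntegral.integral_congr
    intro x _
    simp only [hJdef]
    ring
  -- splitting the generator integral
  have conv0 : ∀ x : ℝ, fwdGen lam v mu w0 phi x * pi x
      = F x * deriv (deriv phi) x + M x * deriv phi x + lam * phi 0 * (w0 x * pi x)
        + lam * phi 1 * ((1 - w0 x) * pi x) - lam * (pi x * phi x) := by
    intro x
    simp only [fwdGen, hFdef, hMdef]
    ring
  have eq1 : ∫ x in Ioo a b, fwdGen lam v mu w0 phi x * pi x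
      = (∫ x in a..b, F x * deriv (deriv phi) x) + (∫ x in a..b, M x * deriv phi x)
        + (∫ x in a..b, lam * phi 0 * (w0 x * pi x))
        + (∫ x in a..b, lam * phi 1 * ((1 - w0 x) * pi x))
        - ∫ x in a..b, lam * (pi x * phi x) := by
    rw [← intervalIntegral.integral_add i1 i2,
      ← intervalIntegral.integral_add (i1.add i2) i3,
      ← intervalIntegral.integral_add ((i1.add i2).add i3) i4,
      ← intervalIntegral.integral_sub (((i1.add i2).add i3).add i4) i5]
    rw [intervalIntegral.integral_of_le hab.le, integral_Ioc_eq_integral_Ioo]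
    apply setIntegral_congr_fun measurableSet_Ioo
    intro x _
    exact conv0 x
  have conv3 : ∫ x in a..b, lam * phi 0 * (w0 x * pi x)
      = lam * phi 0 * ∫ x in Ioo a b, w0 x * pi x := by
    rw [intervalIntegral.integral_const_mul, intervalIntegral.integral_of_le hab.le,
      integral_Ioc_eq_integral_Ioo]
  have conv4 : ∫ x in a..b, lam * phi 1 * ((1 - w0 x) * pi x)
      = lam * phi 1 * ∫ x in Ioo a b, (1 - w0 x) * pi x := by
    rw [intervalIntegral.integral_const_mul, intervalIntegral.integral_of_le hab.le,
      integral_Ioc_eq_integral_Ioo]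
  rw [eq1, conv3, conv4, ibpA]
  have : (∫ x in a..b, M x * deriv phi x) - (∫ x in a..b, deriv F x * deriv phi x)
      = J b * phi b - J a * phi a + lam * ∫ x in a..b, pi x * phi x := by
    rw [← eq3, eq4]
  have conv5 : ∫ x in a..b, lam * (pi x * phi x) = lam * ∫ x in a..b, pi x * phi x :=
    intervalIntegral.integral_const_mul _ _
  simp only [hJdef, hMdef, hFdef] at this ⊢
  linarith [this, conv5]

end Helpers

/-- if a smooth, positive, integrable, normalized `pi` satisfies the adjoint
relation `∫ Gφ·π = 0` for all C² functions `φ`, then it solves the stationary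
boundary value problem. -/
theorem stmt_0 (lam : ℝ) (v mu w0 pi : ℝ → ℝ)
    (H : ModelAssumptions lam v mu w0)
    (hC2 : ContDiffOn ℝ 2 pi (Ioo (0 : ℝ) 1))
    (hpos : ∀ p ∈ Ioo (0 : ℝ) 1, 0 < pi p)
    (hint : IntegrableOn pi (Ioo (0 : ℝ) 1))
    (hmass : (∫ p in Ioo (0 : ℝ) 1, pi p) = 1)
    (hadj : ∀ phi : ℝ → ℝ, ContDiff ℝ 2 phi →
      (∫ p in Ioo (0 : ℝ) 1, fwdGen lam v mu w0 phi p * pi p) = 0) :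
    (∀ p ∈ Ioo (0 : ℝ) 1,
      deriv (deriv fun q => 1 / 2 * v q * pi q) p - deriv (fun q => mu q * pi q) p
        - lam * pi p = 0) ∧
    Tendsto (fun p => mu p * pi p - deriv (fun q => 1 / 2 * v q * pi q) p)
      (𝓝[Ioo (0 : ℝ) 1] 0) (𝓝 (lam * ∫ p in Ioo (0 : ℝ) 1, w0 p * pi p)) ∧
    Tendsto (fun p => mu p * pi p - deriv (fun q => 1 / 2 * v q * pi q) p)
      (𝓝[Ioo (0 : ℝ) 1] 1) (𝓝 (-(lam * ∫ p in Ioo (0 : ℝ) 1, (1 - w0 p) * pi p))) ∧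
    Tendsto (fun p => v p * pi p) (𝓝[Ioo (0 : ℝ) 1] 0) (𝓝 0) ∧
    Tendsto (fun p => v p * pi p) (𝓝[Ioo (0 : ℝ) 1] 1) (𝓝 0) := by
  obtain ⟨U, hUo, hUsub, hva, hmua, hw0a⟩ := H.analytic
  have hvAt : ∀ p ∈ Icc (0:ℝ) 1, ContDiffAt ℝ 2 v p := fun p hp => (hva p (hUsub hp)).contDiffAt
  have hmuAt : ∀ p ∈ Icc (0:ℝ) 1, ContDiffAt ℝ 2 mu p := fun p hp =>
    (hmua p (hUsub hp)).contDiffAt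
  have hw0c : ContinuousOn w0 (Icc (0:ℝ) 1) := fun p hp =>
    (hw0a p (hUsub hp)).continuousAt.continuousWithinAt
  have hvc : ContinuousOn v (Icc (0:ℝ) 1) := fun p hp =>
    (hva p (hUsub hp)).continuousAt.continuousWithinAt
  have hmuc : ContinuousOn mu (Icc (0:ℝ) 1) := fun p hp =>
    (hmua p (hUsub hp)).continuousAt.continuousWithinAt
  -- Step 1: the pointwise ODE
  have hzero : ∀ g : ℝ → ℝ, ContDiff ℝ ∞ g → HasCompactSupport g → tsupport g ⊆ Ioo (0:ℝ) 1 →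
      (∫ p in Ioo (0:ℝ) 1,
        (1 / 2 * v p * pi p * deriv (deriv g) p + mu p * pi p * deriv g p
          - lam * pi p * g p)) = 0 := by
    intro g hg hgs hgsub
    have hg0 : g 0 = 0 := image_eq_zero_of_notMem_tsupport (fun h => lt_irrefl 0 (hgsub h).1)
    have hg1 : g 1 = 0 := image_eq_zero_of_notMem_tsupport (fun h => lt_irrefl 1 (hgsub h).2)
    have h0 := hadj g (hg.of_le (WithTop.coe_le_coe.mpr le_top))
    calc (∫ p in Ioo (0:ℝ) 1,
          (1 / 2 * v p * pi p * deriv (deriv g) p + mu p * pi p * deriv g p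
            - lam * pi p * g p))
        = ∫ p in Ioo (0:ℝ) 1, fwdGen lam v mu w0 g p * pi p := by
          apply setIntegral_congr_fun measurableSet_Ioo
          intro x _
          simp only [fwdGen, hg0, hg1]
          ring
      _ = 0 := h0
  have hODE := ode_of_weak lam v mu pi hvAt hmuAt hC2 hzero
  obtain ⟨K, W, hKc, hWc, hJK, hVW, _⟩ := repr_lemma lam v mu pi hvAt hmuAt hC2 hint hODE
  have hvd0 : HasDerivAt v (deriv v 0) 0 :=
    ((hva 0 (hUsub ⟨le_rfl, zero_le_one⟩)).differentiableAt).hasDerivAt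
  have hvd1 : HasDerivAt v (deriv v 1) 1 :=
    ((hva 1 (hUsub ⟨zero_le_one, le_rfl⟩)).differentiableAt).hasDerivAt
  have hW0 : W 0 = 0 := W_zero_at_zero v pi W hWc hVW hvd0 H.v_zero hpos H.v_pos hint
  have hW1 : W 1 = 0 := W_zero_at_one v pi W hWc hVW hvd1 H.v_one hpos H.v_pos hint
  -- integrability of coefficient × pi
  have hbddInt : ∀ f : ℝ → ℝ, ContinuousOn f (Icc (0:ℝ) 1) →
      IntegrableOn (fun p => f p * pi p) (Ioo (0:ℝ) 1) := by
    intro f hf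
    obtain ⟨C, hC⟩ := isCompact_Icc.exists_bound_of_continuousOn hf
    apply Integrable.bdd_mul (c := C) hint
      ((hf.mono Ioo_subset_Icc_self).aestronglyMeasurable measurableSet_Ioo)
    exact (ae_restrict_iff' measurableSet_Ioo).mpr
      (Eventually.of_forall fun x hx => hC x (Ioo_subset_Icc_self hx))
  have hκ0int : IntegrableOn (fun p => w0 p * pi p) (Ioo (0:ℝ) 1) := hbddInt w0 hw0c
  have hκ1int : IntegrableOn (fun p => (1 - w0 p) * pi p) (Ioo (0:ℝ) 1) :=
    hbddInt _ (continuousOn_const.sub hw0c)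
  set κ0 := ∫ p in Ioo (0:ℝ) 1, w0 p * pi p with hκ0def
  set κ1 := ∫ p in Ioo (0:ℝ) 1, (1 - w0 p) * pi p with hκ1def
  -- exhausting sequences
  set aseq : ℕ → ℝ := fun n => 1 / (n + 3) with haseqdef
  set bseq : ℕ → ℝ := fun n => 1 - 1 / (n + 3) with hbseqdef
  have haseq3 : ∀ n : ℕ, 0 < aseq n ∧ aseq n ≤ 1/3 := by
    intro n
    constructor
    · apply div_pos one_pos; positivity
    · apply div_le_div_of_nonneg_left one_pos.le (by norm_num)
      · push_cast; linarith [Nat.cast_nonneg (α := ℝ) n]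
  have hamem : ∀ n, aseq n ∈ Ioo (0:ℝ) 1 := fun n =>
    ⟨(haseq3 n).1, lt_of_le_of_lt (haseq3 n).2 (by norm_num)⟩
  have hbmem : ∀ n, bseq n ∈ Ioo (0:ℝ) 1 := by
    intro n
    have h1 := (haseq3 n).1
    have h2 := (haseq3 n).2
    exact ⟨by simp only [hbseqdef]; linarith, by simp only [hbseqdef]; linarith⟩
  have habseq : ∀ n, aseq n < bseq n := by
    intro n
    have h2 := (haseq3 n).2
    simp only [hbseqdef]; linarith
  have hanti : ∀ n m : ℕ, n ≤ m → aseq m ≤ aseq n := by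
    intro n m hnm
    apply div_le_div_of_nonneg_left one_pos.le (by positivity)
    push_cast; exact add_le_add (Nat.cast_le.mpr hnm) le_rfl
  have hmono : Monotone (fun n => Ioo (aseq n) (bseq n)) := by
    intro n m hnm
    apply Ioo_subset_Ioo (hanti n m hnm)
    simp only [hbseqdef]
    linarith [hanti n m hnm]
  have hta : Tendsto aseq atTop (𝓝 0) := by
    have h1 : Tendsto (fun n : ℕ => (n:ℝ) + 3) atTop atTop :=
      tendsto_atTop_add_const_right atTop 3 tendsto_natCast_atTop_atTop
    have := h1.inv_tendsto_atTop
    simpa [haseqdef, one_div, Pi.inv_def] using this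
  have htb : Tendsto bseq atTop (𝓝 1) := by
    have := hta.const_sub 1
    simpa [hbseqdef, haseqdef, one_div, sub_zero] using this
  have hunion : (⋃ n, Ioo (aseq n) (bseq n)) = Ioo (0:ℝ) 1 := by
    apply Subset.antisymm
    · exact iUnion_subset fun n => fun x hx =>
        ⟨lt_trans (hamem n).1 hx.1, lt_trans hx.2 (hbmem n).2⟩
    · intro x hx
      obtain ⟨n, hn⟩ := exists_nat_one_div_lt (lt_min hx.1 (by linarith [hx.2] : (0:ℝ) < 1 - x))
      have h3 : aseq n ≤ 1/(n+1) := by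
        apply div_le_div_of_nonneg_left one_pos.le (by positivity)
        push_cast; linarith
      refine mem_iUnion.mpr ⟨n, ?_, ?_⟩
      · exact lt_of_le_of_lt h3 (lt_of_lt_of_le hn (min_le_left _ _))
      · have : 1/((n:ℝ)+1) < 1 - x := lt_of_lt_of_le hn (min_le_right _ _)
        simp only [hbseqdef]
        linarith [h3]
  -- the master identity for any C² test function
  have master : ∀ φ : ℝ → ℝ, ContDiff ℝ 2 φ →
      K 1 * φ 1 - K 0 * φ 0 + lam * φ 0 * κ0 + lam * φ 1 * κ1 = 0 := by
    intro φ hφ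
    obtain ⟨hdφ, hdφ', hcφ', hcφ''⟩ := contDiff_two_deriv_facts φ hφ
    have hGc : ContinuousOn (fwdGen lam v mu w0 φ) (Icc (0:ℝ) 1) := by
      have hc : ContinuousOn (fun p => 1 / 2 * v p * deriv (deriv φ) p + mu p * deriv φ p
          + lam * w0 p * (φ 0 - φ p) + lam * (1 - w0 p) * (φ 1 - φ p)) (Icc (0:ℝ) 1) := by
        refine ContinuousOn.add (ContinuousOn.add (ContinuousOn.add ?_ ?_) ?_) ?_
        · exact (continuousOn_const.mul hvc).mul hcφ''.continuousOn
        · exact hmuc.mul hcφ'.continuousOn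
        · exact (continuousOn_const.mul hw0c).mul
            (continuousOn_const.sub hφ.continuous.continuousOn)
        · exact (continuousOn_const.mul (continuousOn_const.sub hw0c)).mul
            (continuousOn_const.sub hφ.continuous.continuousOn)
      exact hc
    have hGint : IntegrableOn (fun p => fwdGen lam v mu w0 φ p * pi p) (Ioo (0:ℝ) 1) :=
      hbddInt _ hGc
    -- limit of the full integral
    have hX : Tendsto (fun n => ∫ x in Ioo (aseq n) (bseq n), fwdGen lam v mu w0 φ x * pi x)
        atTop (𝓝 0) := by
      have h1 := tendsto_setIntegral_of_monotone (μ := volume)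
        (f := fun p => fwdGen lam v mu w0 φ p * pi p)
        (fun i => measurableSet_Ioo) hmono (by rw [hunion]; exact hGint)
      rw [hunion] at h1
      rwa [hadj φ hφ] at h1
    -- limits of all the pieces
    have htbW : Tendsto (fun n => W (bseq n)) atTop (𝓝 (W 1)) := by
      apply ((hKc.mono (le_refl _) |> fun _ => hWc.continuousWithinAt
        (right_mem_Icc.mpr zero_le_one)).tendsto).comp
      rw [tendsto_nhdsWithin_iff]
      exact ⟨htb, Eventually.of_forall fun n => Ioo_subset_Icc_self (hbmem n)⟩
    have htaW : Tendsto (fun n => W (aseq n)) atTop (𝓝 (W 0)) := by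
      apply ((hWc.continuousWithinAt (left_mem_Icc.mpr zero_le_one)).tendsto).comp
      rw [tendsto_nhdsWithin_iff]
      exact ⟨hta, Eventually.of_forall fun n => Ioo_subset_Icc_self (hamem n)⟩
    have htbK : Tendsto (fun n => K (bseq n)) atTop (𝓝 (K 1)) := by
      apply ((hKc.continuousWithinAt (right_mem_Icc.mpr zero_le_one)).tendsto).comp
      rw [tendsto_nhdsWithin_iff]
      exact ⟨htb, Eventually.of_forall fun n => Ioo_subset_Icc_self (hbmem n)⟩
    have htaK : Tendsto (fun n => K (aseq n)) atTop (𝓝 (K 0)) := by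
      apply ((hKc.continuousWithinAt (left_mem_Icc.mpr zero_le_one)).tendsto).comp
      rw [tendsto_nhdsWithin_iff]
      exact ⟨hta, Eventually.of_forall fun n => Ioo_subset_Icc_self (hamem n)⟩
    have htbφ : Tendsto (fun n => φ (bseq n)) atTop (𝓝 (φ 1)) :=
      (hφ.continuous.tendsto 1).comp htb
    have htaφ : Tendsto (fun n => φ (aseq n)) atTop (𝓝 (φ 0)) :=
      (hφ.continuous.tendsto 0).comp hta
    have htbφ' : Tendsto (fun n => deriv φ (bseq n)) atTop (𝓝 (deriv φ 1)) :=
      (hcφ'.tendsto 1).comp htb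
    have htaφ' : Tendsto (fun n => deriv φ (aseq n)) atTop (𝓝 (deriv φ 0)) :=
      (hcφ'.tendsto 0).comp hta
    have htS0 : Tendsto (fun n => ∫ x in Ioo (aseq n) (bseq n), w0 x * pi x) atTop (𝓝 κ0) := by
      have h1 := tendsto_setIntegral_of_monotone (μ := volume)
        (f := fun p => w0 p * pi p)
        (fun i => measurableSet_Ioo) hmono (by rw [hunion]; exact hκ0int)
      rwa [hunion] at h1
    have htS1 : Tendsto (fun n => ∫ x in Ioo (aseq n) (bseq n), (1 - w0 x) * pi x)
        atTop (𝓝 κ1) := by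
      have h1 := tendsto_setIntegral_of_monotone (μ := volume)
        (f := fun p => (1 - w0 p) * pi p)
        (fun i => measurableSet_Ioo) hmono (by rw [hunion]; exact hκ1int)
      rwa [hunion] at h1
    -- identity for each n
    have hid : ∀ n, ∫ x in Ioo (aseq n) (bseq n), fwdGen lam v mu w0 φ x * pi x
        = (1/2 * W (bseq n)) * deriv φ (bseq n) - (1/2 * W (aseq n)) * deriv φ (aseq n)
          + K (bseq n) * φ (bseq n) - K (aseq n) * φ (aseq n)
          + lam * φ 0 * (∫ x in Ioo (aseq n) (bseq n), w0 x * pi x)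
          + lam * φ 1 * ∫ x in Ioo (aseq n) (bseq n), (1 - w0 x) * pi x := by
      intro n
      rw [ibp_identity lam v mu w0 pi hvAt hmuAt hw0c hC2 hODE φ hφ (aseq n) (bseq n)
        (hamem n).1 (habseq n) (hbmem n).2]
      rw [hJK _ (hbmem n), hJK _ (hamem n)]
      have e1 : 1 / 2 * v (bseq n) * pi (bseq n) = 1/2 * W (bseq n) := by
        rw [mul_assoc, hVW _ (hbmem n)]
      have e2 : 1 / 2 * v (aseq n) * pi (aseq n) = 1/2 * W (aseq n) := by
        rw [mul_assoc, hVW _ (hamem n)]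
      rw [e1, e2]
    -- limit of the right-hand side
    have hRlim : Tendsto (fun n =>
        (1/2 * W (bseq n)) * deriv φ (bseq n) - (1/2 * W (aseq n)) * deriv φ (aseq n)
          + K (bseq n) * φ (bseq n) - K (aseq n) * φ (aseq n)
          + lam * φ 0 * (∫ x in Ioo (aseq n) (bseq n), w0 x * pi x)
          + lam * φ 1 * ∫ x in Ioo (aseq n) (bseq n), (1 - w0 x) * pi x) atTop
        (𝓝 ((1/2 * W 1) * deriv φ 1 - (1/2 * W 0) * deriv φ 0
          + K 1 * φ 1 - K 0 * φ 0 + lam * φ 0 * κ0 + lam * φ 1 * κ1)) := by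
      exact ((((((tendsto_const_nhds.mul htbW).mul htbφ').sub
        ((tendsto_const_nhds.mul htaW).mul htaφ')).add
        (htbK.mul htbφ)).sub (htaK.mul htaφ)).add
        ((tendsto_const_nhds.mul htS0))).add (tendsto_const_nhds.mul htS1)
    have := tendsto_nhds_unique (hX.congr (fun n => hid n)) hRlim
    rw [hW0, hW1] at this
    linarith [this]
  -- apply master with φ = 1 - p and φ = p
  have hK0 : K 0 = lam * κ0 := by
    have h1 := master (fun p => 1 - p) (contDiff_const.sub contDiff_id)
    norm_num at h1
    linarith [h1]
  have hK1 : K 1 = -(lam * κ1) := by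
    have h1 := master (fun p => p) contDiff_id
    norm_num at h1
    linarith [h1]
  refine ⟨hODE, ?_, ?_, ?_, ?_⟩
  · have := tendsto_W_zero K _ 0 (Or.inl rfl) hKc hJK
    rwa [hK0] at this
  · have := tendsto_W_zero K _ 1 (Or.inr rfl) hKc hJK
    rwa [hK1] at this
  · have := tendsto_W_zero W (fun p => v p * pi p) 0 (Or.inl rfl) hWc hVW
    rwa [hW0] at this
  · have := tendsto_W_zero W (fun p => v p * pi p) 1 (Or.inr rfl) hWc hVW
    rwa [hW1] at this
end

section
/- Then ∫₀¹ Gφ(p) π(p) dp = 0 for every twice continuously differentiable function φ on [0,1]. -/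
open MeasureTheory Set Filter Topology Asymptotics

/-- a solution of the stationary boundary value problem satisfies the
adjoint relation `∫ Gφ·π = 0` for all C² functions `φ`. -/
theorem stmt_1 (lam : ℝ) (v mu w0 pi : ℝ → ℝ)
    (H : ModelAssumptions lam v mu w0)
    (HP : StationaryDensity lam v mu w0 pi) :
    ∀ phi : ℝ → ℝ, ContDiff ℝ 2 phi →
      (∫ p in Ioo (0 : ℝ) 1, fwdGen lam v mu w0 phi p * pi p) = 0 := by
  intro phi hphi
  obtain ⟨U, hUo, hIccU, hva, hmua, hw0a⟩ := H.analytic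
  have hIsub : Ioo (0:ℝ) 1 ⊆ Icc 0 1 := Ioo_subset_Icc_self
  have hIopen : IsOpen (Ioo (0:ℝ) 1) := isOpen_Ioo
  -- abbreviations
  set A : ℝ → ℝ := fun q => 1 / 2 * v q * pi q with hAdef
  set g : ℝ → ℝ := fun p => mu p * pi p - deriv A p with hgdef
  set c : ℝ → ℝ := fun p =>
    1 / 2 * v p * deriv (deriv phi) p + mu p * deriv phi p - lam * phi p with hcdef
  set f' : ℝ → ℝ := fun p => c p * pi p with hf'def
  set F : ℝ → ℝ := fun p => deriv phi p * A p + phi p * g p with hFdef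
  set k0 : ℝ := ∫ p in Ioo (0:ℝ) 1, w0 p * pi p with hk0
  set k1 : ℝ := ∫ p in Ioo (0:ℝ) 1, (1 - w0 p) * pi p with hk1
  -- smoothness of phi
  have hphi2 : ContDiff ℝ ((1 : WithTop ℕ∞) + 1) phi := by
    convert hphi using 2
    exact one_add_one_eq_two
  have hphid : Differentiable ℝ phi := (contDiff_succ_iff_deriv.mp hphi2).1
  have hphi' : ContDiff ℝ 1 (deriv phi) := (contDiff_succ_iff_deriv.mp hphi2).2.2
  have hphi'd : Differentiable ℝ (deriv phi) := hphi'.differentiable one_ne_zero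
  -- smoothness of coefficients on Ioo
  have hvC : ContDiffOn ℝ 2 v (Ioo (0:ℝ) 1) := fun p hp =>
    ((hva p (hIccU (hIsub hp))).contDiffAt).contDiffWithinAt
  have hmuC : ContDiffOn ℝ 1 mu (Ioo (0:ℝ) 1) := fun p hp =>
    ((hmua p (hIccU (hIsub hp))).contDiffAt).contDiffWithinAt
  have hAC : ContDiffOn ℝ 2 A (Ioo (0:ℝ) 1) :=
    (contDiffOn_const.mul hvC).mul HP.contDiffOn
  have hBC : ContDiffOn ℝ 1 (fun q => mu q * pi q) (Ioo (0:ℝ) 1) :=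
    hmuC.mul (HP.contDiffOn.of_le one_le_two)
  have hA'C : ContDiffOn ℝ 1 (deriv A) (Ioo (0:ℝ) 1) :=
    hAC.deriv_of_isOpen hIopen (by norm_num)
  -- pointwise derivatives
  have hAd : ∀ p ∈ Ioo (0:ℝ) 1, HasDerivAt A (deriv A p) p := fun p hp =>
    (((hAC.differentiableOn two_ne_zero) p hp).differentiableAt
      (hIopen.mem_nhds hp)).hasDerivAt
  have hA'd : ∀ p ∈ Ioo (0:ℝ) 1, HasDerivAt (deriv A) (deriv (deriv A) p) p := fun p hp =>
    (((hA'C.differentiableOn one_ne_zero) p hp).differentiableAt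
      (hIopen.mem_nhds hp)).hasDerivAt
  have hBd : ∀ p ∈ Ioo (0:ℝ) 1,
      HasDerivAt (fun q => mu q * pi q) (deriv (fun q => mu q * pi q) p) p := fun p hp =>
    (((hBC.differentiableOn one_ne_zero) p hp).differentiableAt
      (hIopen.mem_nhds hp)).hasDerivAt
  have hgd : ∀ p ∈ Ioo (0:ℝ) 1, HasDerivAt g (-(lam * pi p)) p := by
    intro p hp
    have h := (hBd p hp).sub (hA'd p hp)
    have e : deriv (fun q => mu q * pi q) p - deriv (deriv A) p = -(lam * pi p) := by
      have := HP.ode p hp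
      linarith
    rw [e] at h
    exact h
  have hFd : ∀ p ∈ Ioo (0:ℝ) 1, HasDerivAt F (f' p) p := by
    intro p hp
    have h1 : HasDerivAt (fun q => deriv phi q * A q)
        (deriv (deriv phi) p * A p + deriv phi p * deriv A p) p :=
      ((hphi'd p).hasDerivAt).mul (hAd p hp)
    have h2 : HasDerivAt (fun q => phi q * g q)
        (deriv phi p * g p + phi p * -(lam * pi p)) p :=
      ((hphid p).hasDerivAt).mul (hgd p hp)
    have h := h1.add h2
    refine h.congr_deriv ?_
    simp only [f', c, g, A]
    ring
  -- boundary limits of F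
  have hphi'c0 : Tendsto (deriv phi) (𝓝[Ioo (0:ℝ) 1] 0) (𝓝 (deriv phi 0)) :=
    (hphi'.continuous.tendsto 0).mono_left nhdsWithin_le_nhds
  have hphic0 : Tendsto phi (𝓝[Ioo (0:ℝ) 1] 0) (𝓝 (phi 0)) :=
    (hphi.continuous.tendsto 0).mono_left nhdsWithin_le_nhds
  have hphi'c1 : Tendsto (deriv phi) (𝓝[Ioo (0:ℝ) 1] 1) (𝓝 (deriv phi 1)) :=
    (hphi'.continuous.tendsto 1).mono_left nhdsWithin_le_nhds
  have hphic1 : Tendsto phi (𝓝[Ioo (0:ℝ) 1] 1) (𝓝 (phi 1)) :=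
    (hphi.continuous.tendsto 1).mono_left nhdsWithin_le_nhds
  have hA0 : Tendsto A (𝓝[Ioo (0:ℝ) 1] 0) (𝓝 0) := by
    have h := HP.vpi_zero.const_mul (1/2 : ℝ)
    rw [mul_zero] at h
    refine h.congr fun p => by simp [hAdef]; ring
  have hA1 : Tendsto A (𝓝[Ioo (0:ℝ) 1] 1) (𝓝 0) := by
    have h := HP.vpi_one.const_mul (1/2 : ℝ)
    rw [mul_zero] at h
    refine h.congr fun p => by simp [hAdef]; ring
  have hF0 : Tendsto F (𝓝[>] (0:ℝ)) (𝓝 (phi 0 * (lam * k0))) := by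
    rw [← nhdsWithin_Ioo_eq_nhdsGT (zero_lt_one (α := ℝ))]
    have h := (hphi'c0.mul hA0).add (hphic0.mul HP.bc_zero)
    rw [mul_zero, zero_add] at h
    exact h
  have hF1 : Tendsto F (𝓝[<] (1:ℝ)) (𝓝 (phi 1 * -(lam * k1))) := by
    rw [← nhdsWithin_Ioo_eq_nhdsLT (zero_lt_one (α := ℝ))]
    have h := (hphi'c1.mul hA1).add (hphic1.mul HP.bc_one)
    rw [mul_zero, zero_add] at h
    exact h
  -- bounded continuous multipliers are integrable against pi
  have hbddmul : ∀ q : ℝ → ℝ, ContinuousOn q (Icc 0 1) →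
      IntegrableOn (fun p => q p * pi p) (Ioo (0:ℝ) 1) := by
    intro q hq
    obtain ⟨M, hM⟩ := isCompact_Icc.exists_bound_of_continuousOn hq
    refine HP.integrableOn.bdd_mul (c := M)
      ((hq.mono hIsub).aestronglyMeasurable measurableSet_Ioo) ?_
    exact (ae_restrict_iff' measurableSet_Ioo).2 (ae_of_all _ fun x hx => hM x (hIsub hx))
  have hvcont : ContinuousOn v (Icc (0:ℝ) 1) := fun p hp =>
    (hva p (hIccU hp)).continuousAt.continuousWithinAt
  have hmucont : ContinuousOn mu (Icc (0:ℝ) 1) := fun p hp =>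
    (hmua p (hIccU hp)).continuousAt.continuousWithinAt
  have hw0cont : ContinuousOn w0 (Icc (0:ℝ) 1) := fun p hp =>
    (hw0a p (hIccU hp)).continuousAt.continuousWithinAt
  have hphi''c : Continuous (deriv (deriv phi)) := (contDiff_one_iff_deriv.mp hphi').2
  have hccont : ContinuousOn c (Icc (0:ℝ) 1) :=
    (((continuousOn_const.mul hvcont).mul hphi''c.continuousOn).add
      (hmucont.mul hphi'.continuous.continuousOn)).sub
      (continuousOn_const.mul hphi.continuous.continuousOn)
  have hf'int : IntegrableOn f' (Ioo (0:ℝ) 1) := hbddmul c hccont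
  have hw0int : IntegrableOn (fun p => w0 p * pi p) (Ioo (0:ℝ) 1) :=
    hbddmul w0 hw0cont
  have hw1int : IntegrableOn (fun p => (1 - w0 p) * pi p) (Ioo (0:ℝ) 1) :=
    hbddmul _ (continuousOn_const.sub hw0cont)
  -- FTC on (0,1)
  have hf'ii : IntervalIntegrable f' volume 0 1 := by
    rw [intervalIntegrable_iff_integrableOn_Ioc_of_le zero_le_one,
      integrableOn_Ioc_iff_integrableOn_Ioo]
    exact hf'int
  have key : (∫ p in Ioo (0:ℝ) 1, f' p)
      = phi 1 * -(lam * k1) - phi 0 * (lam * k0) := by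
    have h := intervalIntegral.integral_eq_sub_of_hasDerivAt_of_tendsto
      zero_lt_one hFd hf'ii hF0 hF1
    rwa [intervalIntegral.integral_of_le zero_le_one,
      MeasureTheory.integral_Ioc_eq_integral_Ioo] at h
  -- decompose the generator integral
  have hsplit : ∀ p : ℝ, fwdGen lam v mu w0 phi p * pi p
      = f' p + ((lam * phi 0) * (w0 p * pi p) + (lam * phi 1) * ((1 - w0 p) * pi p)) := by
    intro p
    simp only [fwdGen, hf'def, hcdef]
    ring
  have hrest : IntegrableOn (fun p => (lam * phi 0) * (w0 p * pi p)
      + (lam * phi 1) * ((1 - w0 p) * pi p)) (Ioo (0:ℝ) 1) :=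
    (hw0int.const_mul _).add (hw1int.const_mul _)
  have h2 : (∫ p in Ioo (0:ℝ) 1, ((lam * phi 0) * (w0 p * pi p)
      + (lam * phi 1) * ((1 - w0 p) * pi p)))
      = (lam * phi 0) * k0 + (lam * phi 1) * k1 := by
    rw [integral_add (hw0int.const_mul _) (hw1int.const_mul _),
      integral_const_mul, integral_const_mul]
  calc (∫ p in Ioo (0:ℝ) 1, fwdGen lam v mu w0 phi p * pi p)
      = ∫ p in Ioo (0:ℝ) 1, (f' p + ((lam * phi 0) * (w0 p * pi p)
          + (lam * phi 1) * ((1 - w0 p) * pi p))) := by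
        exact integral_congr_ae (ae_of_all _ fun p => hsplit p)
    _ = (∫ p in Ioo (0:ℝ) 1, f' p) + ((lam * phi 0) * k0 + (lam * phi 1) * k1) := by
        rw [integral_add hf'int hrest, h2]
    _ = 0 := by rw [key]; ring
end

section
/- Let π : (0,1) → [0,∞) be twice continuously differentiable, not identically zero, and satisfy ((1/2) v π)''(p) − (μ π)'(p) − λ π(p) = 0 for all p ∈ (0,1). Then π(p) > 0 for all p ∈ (0,1). -/
open MeasureTheory Set Filter Topology Asymptotics

/-- A solution of a second-order linear ODE with continuous coefficients that vanishes to
first order at an interior point vanishes on the whole interval. -/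
lemma vanish_of_linear_ode {A B f : ℝ → ℝ} {a b z : ℝ} (hz : z ∈ Ioo a b)
    (hA : ContinuousOn A (Icc a b)) (hB : ContinuousOn B (Icc a b))
    (hf : ∀ t ∈ Ioo a b, HasDerivAt f (deriv f t) t)
    (hf' : ∀ t ∈ Ioo a b, HasDerivAt (deriv f) (A t * f t + B t * deriv f t) t)
    (hfz : f z = 0) (hf'z : deriv f z = 0) :
    ∀ t ∈ Ioo a b, f t = 0 := by
  obtain ⟨CA, hCA⟩ := isCompact_Icc.exists_bound_of_continuousOn hA
  obtain ⟨CB, hCB⟩ := isCompact_Icc.exists_bound_of_continuousOn hB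
  have hzm : z ∈ Icc a b := ⟨hz.1.le, hz.2.le⟩
  have hCA0 : 0 ≤ CA := le_trans (norm_nonneg _) (hCA z hzm)
  have hCB0 : 0 ≤ CB := le_trans (norm_nonneg _) (hCB z hzm)
  set A' : ℝ → ℝ := fun t => if a < t ∧ t < b then A t else 0 with hA'def
  set B' : ℝ → ℝ := fun t => if a < t ∧ t < b then B t else 0 with hB'def
  have hA'bd : ∀ t, |A' t| ≤ CA := by
    intro t
    simp only [hA'def]
    by_cases h : a < t ∧ t < b
    · rw [if_pos h]
      simpa using hCA t ⟨h.1.le, h.2.le⟩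
    · rw [if_neg h]; simpa using hCA0
  have hB'bd : ∀ t, |B' t| ≤ CB := by
    intro t
    simp only [hB'def]
    by_cases h : a < t ∧ t < b
    · rw [if_pos h]
      simpa using hCB t ⟨h.1.le, h.2.le⟩
    · rw [if_neg h]; simpa using hCB0
  set V : ℝ → ℝ × ℝ → ℝ × ℝ := fun t x => (x.2, A' t * x.1 + B' t * x.2) with hVdef
  set K : NNReal := (1 + CA + CB).toNNReal with hKdef
  have hKcoe : (K : ℝ) = 1 + CA + CB := Real.coe_toNNReal _ (by positivity)
  have hv : ∀ t, LipschitzOnWith K (V t) univ := by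
    intro t
    apply LipschitzOnWith.of_dist_le_mul
    intro x _ y _
    rw [hKcoe]
    simp only [hVdef, Prod.dist_eq, Real.dist_eq]
    set m := max |x.1 - y.1| |x.2 - y.2| with hm
    have h1 : |x.1 - y.1| ≤ m := le_max_left _ _
    have h2 : |x.2 - y.2| ≤ m := le_max_right _ _
    have hm0 : 0 ≤ m := le_trans (abs_nonneg _) h1
    apply max_le
    · nlinarith
    · have e : A' t * x.1 + B' t * x.2 - (A' t * y.1 + B' t * y.2)
          = A' t * (x.1 - y.1) + B' t * (x.2 - y.2) := by ring
      rw [e]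
      calc |A' t * (x.1 - y.1) + B' t * (x.2 - y.2)|
          ≤ |A' t * (x.1 - y.1)| + |B' t * (x.2 - y.2)| := abs_add_le _ _
        _ = |A' t| * |x.1 - y.1| + |B' t| * |x.2 - y.2| := by rw [abs_mul, abs_mul]
        _ ≤ CA * m + CB * m := by
            gcongr
            exacts [hA'bd t, hB'bd t]
        _ ≤ (1 + CA + CB) * m := by nlinarith
  have key : EqOn (fun t => (f t, deriv f t)) (fun _ => ((0 : ℝ), (0 : ℝ))) (Ioo a b) := by
    apply ODE_solution_unique_of_mem_Ioo (fun t _ => hv t) hz (s := fun _ => univ)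
    · intro t ht
      refine ⟨?_, mem_univ _⟩
      have h := (hf t ht).prodMk (hf' t ht)
      refine h.congr_deriv ?_
      have ht' : a < t ∧ t < b := mem_Ioo.mp ht
      simp only [hVdef, hA'def, hB'def]
      rw [if_pos ht', if_pos ht']
    · intro t ht
      refine ⟨?_, mem_univ _⟩
      have : V t ((0 : ℝ), (0 : ℝ)) = ((0 : ℝ), (0 : ℝ)) := by simp [hVdef]
      rw [this]
      exact hasDerivAt_const _ _
    · simp [hfz, hf'z]
  intro t ht
  have := key ht
  simpa using congrArg Prod.fst this

/-- a nonnegative, not identically zero, C² solution of the stationary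
ODE is strictly positive on (0,1). -/
theorem stmt_2 (lam : ℝ) (v mu w0 pi : ℝ → ℝ)
    (H : ModelAssumptions lam v mu w0)
    (hC2 : ContDiffOn ℝ 2 pi (Ioo (0 : ℝ) 1))
    (hnonneg : ∀ p ∈ Ioo (0 : ℝ) 1, 0 ≤ pi p)
    (hne : ∃ p ∈ Ioo (0 : ℝ) 1, pi p ≠ 0)
    (hode : ∀ p ∈ Ioo (0 : ℝ) 1,
      deriv (deriv fun q => 1 / 2 * v q * pi q) p - deriv (fun q => mu q * pi q) p
        - lam * pi p = 0) :
    ∀ p ∈ Ioo (0 : ℝ) 1, 0 < pi p := by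
  obtain ⟨U, hUopen, hUsub, hva, hmua, -⟩ := H.analytic
  set I : Set ℝ := Ioo (0 : ℝ) 1 with hIdef
  have hIopen : IsOpen I := isOpen_Ioo
  have hIU : I ⊆ U := fun x hx => hUsub ⟨hx.1.le, hx.2.le⟩
  -- derivatives of the coefficients
  have hvU : ∀ q ∈ U, HasDerivAt v (deriv v q) q :=
    fun q hq => ((hva q hq).differentiableAt).hasDerivAt
  have hv'a : AnalyticOnNhd ℝ (deriv v) U := hva.deriv
  have hv'U : ∀ q ∈ U, HasDerivAt (deriv v) (deriv (deriv v) q) q :=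
    fun q hq => ((hv'a q hq).differentiableAt).hasDerivAt
  have hmuU : ∀ q ∈ U, HasDerivAt mu (deriv mu q) q :=
    fun q hq => ((hmua q hq).differentiableAt).hasDerivAt
  -- derivatives of pi
  have hπdiff : ∀ q ∈ I, HasDerivAt pi (deriv pi q) q := by
    intro q hq
    exact ((hC2.contDiffAt (hIopen.mem_nhds hq)).differentiableAt (by norm_num)).hasDerivAt
  have hC1' : ContDiffOn ℝ 1 (deriv pi) I := hC2.deriv_of_isOpen hIopen (by norm_num)
  have hπ'diff : ∀ q ∈ I, HasDerivAt (deriv pi) (deriv (deriv pi) q) q := by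
    intro q hq
    exact ((hC1'.contDiffAt (hIopen.mem_nhds hq)).differentiableAt one_ne_zero).hasDerivAt
  -- coefficient functions of the normalized ODE
  set A : ℝ → ℝ := fun q => (deriv mu q + lam - 1 / 2 * deriv (deriv v) q) * (2 / v q) with hAdef
  set B : ℝ → ℝ := fun q => (mu q - deriv v q) * (2 / v q) with hBdef
  -- the ODE in normal form
  have hkey : ∀ p ∈ I, HasDerivAt (deriv pi) (A p * pi p + B p * deriv pi p) p := by
    intro p hp
    have hpU : p ∈ U := hIU hp
    have hd1 : ∀ q ∈ I, HasDerivAt (fun x => 1 / 2 * v x * pi x)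
        (1 / 2 * deriv v q * pi q + 1 / 2 * v q * deriv pi q) q := by
      intro q hq
      have h := ((hvU q (hIU hq)).const_mul (1 / 2 : ℝ)).mul (hπdiff q hq)
      exact h
    have heq1 : deriv (fun x => 1 / 2 * v x * pi x)
        =ᶠ[nhds p] fun x => 1 / 2 * deriv v x * pi x + 1 / 2 * v x * deriv pi x := by
      filter_upwards [hIopen.mem_nhds hp] with q hq using (hd1 q hq).deriv
    have h3 : HasDerivAt (fun x => 1 / 2 * deriv v x * pi x + 1 / 2 * v x * deriv pi x)
        ((1 / 2 * deriv (deriv v) p * pi p + 1 / 2 * deriv v p * deriv pi p)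
          + (1 / 2 * deriv v p * deriv pi p + 1 / 2 * v p * deriv (deriv pi) p)) p :=
      (((hv'U p hpU).const_mul (1 / 2 : ℝ)).mul (hπdiff p hp)).add
        (((hvU p hpU).const_mul (1 / 2 : ℝ)).mul (hπ'diff p hp))
    have h2 : deriv (deriv fun x => 1 / 2 * v x * pi x) p
        = (1 / 2 * deriv (deriv v) p * pi p + 1 / 2 * deriv v p * deriv pi p)
          + (1 / 2 * deriv v p * deriv pi p + 1 / 2 * v p * deriv (deriv pi) p) := by
      rw [heq1.deriv_eq]
      exact h3.deriv
    have h4 : deriv (fun x => mu x * pi x) p = deriv mu p * pi p + mu p * deriv pi p :=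
      ((hmuU p hpU).mul (hπdiff p hp)).deriv
    have hODE := hode p hp
    rw [h2, h4] at hODE
    have hv0 : v p ≠ 0 := (H.v_pos p hp).ne'
    have hval : deriv (deriv pi) p = A p * pi p + B p * deriv pi p := by
      rw [hAdef, hBdef]
      field_simp
      nlinarith [hODE]
    rw [← hval]
    exact hπ'diff p hp
  -- continuity of the coefficients on I
  have hcv : ContinuousOn v I := (hva.continuousOn).mono hIU
  have hcmu' : ContinuousOn (deriv mu) I := ((hmua.deriv).continuousOn).mono hIU
  have hcv'' : ContinuousOn (deriv (deriv v)) I :=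
    ((hv'a.deriv).continuousOn).mono hIU
  have hvne : ∀ q ∈ I, v q ≠ 0 := fun q hq => (H.v_pos q hq).ne'
  have hcA : ContinuousOn A I := by
    rw [hAdef]
    exact ((hcmu'.add continuousOn_const).sub (continuousOn_const.mul hcv'')).mul
      (continuousOn_const.div hcv hvne)
  have hcB : ContinuousOn B I := by
    rw [hBdef]
    exact (((hmua.continuousOn).mono hIU).sub ((hv'a.continuousOn).mono hIU)).mul
      (continuousOn_const.div hcv hvne)
  -- the set where pi vanishes is open in ℝ
  have hloc : ∀ z ∈ I, pi z = 0 → ∀ᶠ q in nhds z, q ∈ I ∧ pi q = 0 := by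
    intro z hzI hz0
    -- z is a local minimum, so deriv pi z = 0
    have hmin : IsLocalMin pi z := by
      filter_upwards [hIopen.mem_nhds hzI] with q hq
      rw [hz0]; exact hnonneg q hq
    have hz1 : deriv pi z = 0 := hmin.deriv_eq_zero
    set a := z / 2 with ha
    set b := (z + 1) / 2 with hb
    have hzab : z ∈ Ioo a b :=
      ⟨by rw [ha]; linarith [hzI.1], by rw [hb]; linarith [hzI.2]⟩
    have hsub : Icc a b ⊆ I := by
      intro x hx
      constructor
      · have : 0 < a := by rw [ha]; linarith [hzI.1]
        linarith [hx.1]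
      · have : b < 1 := by rw [hb]; linarith [hzI.2]
        linarith [hx.2]
    have hsub' : Ioo a b ⊆ I := fun x hx => hsub ⟨hx.1.le, hx.2.le⟩
    have hvan := vanish_of_linear_ode hzab (hcA.mono hsub) (hcB.mono hsub)
      (fun t ht => hπdiff t (hsub' ht)) (fun t ht => hkey t (hsub' ht)) hz0 hz1
    filter_upwards [(isOpen_Ioo (a := a) (b := b)).mem_nhds hzab] with q hq
    exact ⟨hsub' hq, hvan q hq⟩
  -- main positivity argument
  intro p hp
  rcases (hnonneg p hp).lt_or_eq with h | h
  · exact h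
  exfalso
  -- pi vanishes at p; show it vanishes everywhere on I, contradicting hne
  obtain ⟨q, hq, hqne⟩ := hne
  set S : Set ℝ := {x | x ∈ I ∧ pi x = 0} with hSdef
  set T : Set ℝ := {x | x ∈ I ∧ pi x ≠ 0} with hTdef
  have hSopen : IsOpen S := by
    rw [isOpen_iff_mem_nhds]
    intro x hx
    exact (hloc x hx.1 hx.2).mono (fun y hy => hy)
  have hTopen : IsOpen T := by
    have : T = I ∩ pi ⁻¹' {(0 : ℝ)}ᶜ := by
      ext x; simp [hTdef, hIdef]
    rw [this]
    exact (hC2.continuousOn).isOpen_inter_preimage hIopen (isOpen_compl_iff.mpr isClosed_singleton)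
  have hpre : IsPreconnected I := isPreconnected_Ioo
  have hcover : I ⊆ S ∪ T := by
    intro x hx
    by_cases h0 : pi x = 0
    · exact Or.inl ⟨hx, h0⟩
    · exact Or.inr ⟨hx, h0⟩
  have hSne : (I ∩ S).Nonempty := ⟨p, hp, hp, h.symm⟩
  have hTne : (I ∩ T).Nonempty := ⟨q, hq, hq, hqne⟩
  obtain ⟨x, -, hxS, hxT⟩ := hpre S T hSopen hTopen hcover hSne hTne
  exact hxT.2 hxS.2
end

section
/- Let i ∈ {0,1} and assume 2μ(i) = v'(i) and that λwᵢ is identically zero on [0,1]. Then the limit lim_{p→i} π(p) exists and is strictly positive. -/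
set_option maxHeartbeats 1600000
open MeasureTheory Set Filter Topology intervalIntegral Real

lemma core_limit (lam a : ℝ) (v phi pi F : ℝ → ℝ)
    (hlam : 0 ≤ lam)
    (hπpos : ∀ p ∈ Ioo (0:ℝ) 1, 0 < pi p)
    (hπcont : ContinuousOn pi (Ioo (0:ℝ) 1))
    (hπint : IntegrableOn pi (Ioo (0:ℝ) 1))
    (hvpos : ∀ p ∈ Ioo (0:ℝ) 1, 0 < v p)
    (hvcont : ContinuousOn v (Ioo (0:ℝ) 1))
    (hφcont : ContinuousOn phi (Ioo (0:ℝ) 1))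
    (hva : HasDerivAt v a 0) (hv0 : v 0 = 0) (ha : 0 < a)
    (hφd : DifferentiableAt ℝ phi 0) (hφ0 : phi 0 = 0)
    (hFd : ∀ p ∈ Ioo (0:ℝ) 1, HasDerivAt F (-(lam * pi p)) p)
    (hF0 : Tendsto F (𝓝[Ioo (0:ℝ) 1] 0) (𝓝 0))
    (hform : ∀ p ∈ Ioo (0:ℝ) 1, HasDerivAt pi ((phi p * pi p - 2 * F p) / v p) p) :
    ∃ L : ℝ, 0 < L ∧ Tendsto pi (𝓝[Ioo (0:ℝ) 1] 0) (𝓝 L) := by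
  -- NeBot instance
  haveI hNB : (𝓝[Ioo (0:ℝ) 1] (0:ℝ)).NeBot := by
    apply mem_closure_iff_nhdsWithin_neBot.mp
    rw [closure_Ioo (zero_ne_one)]
    exact ⟨le_rfl, zero_le_one⟩
  -- slope bounds
  have hvslope : ∀ᶠ p in 𝓝[>] (0:ℝ), a / 2 * p ≤ v p := by
    have h1 : Tendsto (fun p => v p / p) (𝓝[>] (0:ℝ)) (𝓝 a) := by
      have h2 := hasDerivAt_iff_tendsto_slope.mp hva
      have h3 : Tendsto (slope v 0) (𝓝[>] (0:ℝ)) (𝓝 a) :=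
        h2.mono_left (nhdsWithin_mono _ fun x hx => ne_of_gt hx)
      refine h3.congr fun p => ?_
      rw [slope_def_field]; rw [hv0]; ring_nf
    filter_upwards [h1.eventually (eventually_ge_nhds (by linarith : a / 2 < a)),
      self_mem_nhdsWithin] with p hp hp'
    have hp0 : (0:ℝ) < p := hp'
    calc a / 2 * p ≤ v p / p * p := by nlinarith
      _ = v p := by field_simp
  obtain ⟨C, hC0, hφev⟩ : ∃ C > 0, ∀ᶠ p in 𝓝[>] (0:ℝ), |phi p| ≤ C * p := by
    refine ⟨|deriv phi 0| + 1, by positivity, ?_⟩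
    have h2 := hasDerivAt_iff_tendsto_slope.mp hφd.hasDerivAt
    have h3 : Tendsto (slope phi 0) (𝓝[>] (0:ℝ)) (𝓝 (deriv phi 0)) :=
      h2.mono_left (nhdsWithin_mono _ fun x hx => ne_of_gt hx)
    have h4 : ∀ᶠ p in 𝓝[>] (0:ℝ), |slope phi 0 p - deriv phi 0| < 1 := by
      have : Tendsto (fun p => slope phi 0 p - deriv phi 0) (𝓝[>] (0:ℝ)) (𝓝 0) := by
        simpa using h3.sub_const (deriv phi 0)
      have := this.eventually (eventually_abs_sub_lt 0 one_pos)
      simpa using this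
    filter_upwards [h4, self_mem_nhdsWithin] with p hp hp'
    have hp0 : (0:ℝ) < p := hp'
    have hs : slope phi 0 p = phi p / p := by rw [slope_def_field, hφ0]; ring_nf
    rw [hs] at hp
    have h5 : |phi p / p| ≤ |deriv phi 0| + 1 := by
      have := abs_sub_abs_le_abs_sub (phi p / p) (deriv phi 0)
      linarith
    calc |phi p| = |phi p / p| * p := by
          rw [abs_div, abs_of_pos hp0]; field_simp
      _ ≤ (|deriv phi 0| + 1) * p := by nlinarith
  obtain ⟨δ, hδ0, hδ⟩ : ∃ δ > 0, ∀ p ∈ Ioo (0:ℝ) δ, a / 2 * p ≤ v p ∧ |phi p| ≤ C * p := by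
    obtain ⟨u, hu, hsub⟩ := mem_nhdsGT_iff_exists_Ioo_subset.mp (hvslope.and hφev)
    exact ⟨u, hu, fun p hp => hsub hp⟩
  set b : ℝ := min δ (1/2) with hbdef
  have hb0 : 0 < b := lt_min hδ0 (by norm_num)
  have hb1 : b < 1 := lt_of_le_of_lt (min_le_right _ _) (by norm_num)
  have hbδ : b ≤ δ := min_le_left _ _
  have hbS : Ioo (0:ℝ) b ⊆ Ioo 0 1 := Ioo_subset_Ioo le_rfl hb1.le
  have hbd : ∀ p ∈ Ioo (0:ℝ) b, a / 2 * p ≤ v p ∧ |phi p| ≤ C * p :=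
    fun p hp => hδ p ⟨hp.1, lt_of_lt_of_le hp.2 hbδ⟩
  set Cb : ℝ := 2 * C / a with hCbdef
  have hCb0 : 0 < Cb := by positivity
  have hhbd : ∀ p ∈ Ioo (0:ℝ) b, |phi p / v p| ≤ Cb := by
    intro p hp
    have h1 := (hbd p hp).1
    have h2 := (hbd p hp).2
    have hvp : 0 < v p := hvpos p (hbS hp)
    rw [abs_div, abs_of_pos hvp, div_le_iff₀ hvp]
    calc |phi p| ≤ C * p := h2
      _ = Cb * (a / 2 * p) := by rw [hCbdef]; field_simp
      _ ≤ Cb * v p := by nlinarith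
  -- filter restriction
  have hrestr : ∀ c : ℝ, 0 < c → c ≤ 1 →
      𝓝[Ioo (0:ℝ) 1] (0:ℝ) = 𝓝[Ioo (0:ℝ) c] (0:ℝ) := by
    intro c hc hc1
    have hset : Ioo (0:ℝ) c = Ioo (0:ℝ) 1 ∩ Iio c := by
      ext x
      simp only [mem_inter_iff, mem_Ioo, mem_Iio]
      constructor
      · rintro ⟨h1, h3⟩; exact ⟨⟨h1, lt_of_lt_of_le h3 hc1⟩, h3⟩
      · rintro ⟨⟨h1, _⟩, h3⟩; exact ⟨h1, h3⟩
    rw [hset]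
    exact nhdsWithin_restrict' (Ioo (0:ℝ) 1) (Iio_mem_nhds hc)
  have hle : 𝓝[Ioo (0:ℝ) 1] (0:ℝ) ≤ 𝓝[>] (0:ℝ) :=
    nhdsWithin_mono _ Ioo_subset_Ioi_self
  -- integrability of pi
  have hπInt' : IntegrableOn pi (Ioc (0:ℝ) 1) := by
    rw [integrableOn_Ioc_iff_integrableOn_Ioo]; exact hπint
  have hπii : ∀ {x y : ℝ}, 0 ≤ x → y ≤ 1 → x ≤ y → IntervalIntegrable pi volume x y := by
    intro x y hx hy hxy
    rw [intervalIntegrable_iff_integrableOn_Ioc_of_le hxy]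
    exact hπInt'.mono_set (Ioc_subset_Ioc hx hy)
  set m : ℝ → ℝ := fun p => ∫ t in (0:ℝ)..p, pi t with hmdef
  have hmd : ∀ p ∈ Ioo (0:ℝ) 1, HasDerivAt m (pi p) p := by
    intro p hp
    exact intervalIntegral.integral_hasDerivAt_right (hπii le_rfl hp.2.le hp.1.le)
      (hπcont.stronglyMeasurableAtFilter isOpen_Ioo p hp)
      (hπcont.continuousAt (isOpen_Ioo.mem_nhds hp))
  have hmIoo : ∀ p ∈ Ioo (0:ℝ) 1, m p = ∫ t in Ioo (0:ℝ) p, pi t := by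
    intro p hp
    rw [hmdef]
    simp only []
    rw [intervalIntegral.integral_of_le hp.1.le, MeasureTheory.integral_Ioc_eq_integral_Ioo]
  have hm0 : Tendsto m (𝓝[Ioo (0:ℝ) 1] 0) (𝓝 0) := by
    have hc : ContinuousOn (fun x => ∫ t in Ioc (0:ℝ) x, pi t) (Icc 0 1) :=
      continuousOn_primitive (by rw [integrableOn_Icc_iff_integrableOn_Ioc]; exact hπInt')
    have h1 : Tendsto (fun x => ∫ t in Ioc (0:ℝ) x, pi t) (𝓝[Ioo (0:ℝ) 1] 0) (𝓝 0) := by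
      have h2 := (hc 0 (left_mem_Icc.mpr zero_le_one)).tendsto
      have h3 : (∫ t in Ioc (0:ℝ) (0:ℝ), pi t) = 0 := by simp
      rw [h3] at h2
      exact h2.mono_left (nhdsWithin_mono _ Ioo_subset_Icc_self)
    refine h1.congr' ?_
    filter_upwards [self_mem_nhdsWithin] with p hp
    rw [hmdef]
    simp only []
    rw [intervalIntegral.integral_of_le hp.1.le]
  have hmnonneg : ∀ p ∈ Ioo (0:ℝ) 1, 0 ≤ m p := by
    intro p hp
    rw [hmIoo p hp]
    exact setIntegral_nonneg measurableSet_Ioo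
      (fun x hx => (hπpos x ⟨hx.1, hx.2.trans hp.2⟩).le)
  -- F = -(lam * m)
  have hKeq : ∀ p ∈ Ioo (0:ℝ) 1, F p = -(lam * m p) := by
    set K : ℝ → ℝ := fun p => F p + lam * m p with hKdef
    have hKd : ∀ p ∈ Ioo (0:ℝ) 1, HasDerivAt K 0 p := by
      intro p hp
      have := (hFd p hp).add ((hmd p hp).const_mul lam)
      have h0 : -(lam * pi p) + lam * pi p = 0 := by ring
      rw [h0] at this
      exact this
    have hKconst : ∀ p ∈ Ioo (0:ℝ) 1, ∀ q ∈ Ioo (0:ℝ) 1, q ≤ p → K p = K q := by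
      intro p hp q hq hqp
      have hsub : Icc q p ⊆ Ioo (0:ℝ) 1 := Icc_subset_Ioo hq.1 hp.2
      have := constant_of_has_deriv_right_zero (f := K) (a := q) (b := p)
        (fun x hx => ((hKd x (hsub hx)).continuousAt).continuousWithinAt)
        (fun x hx => ((hKd x (hsub (Ico_subset_Icc_self hx))).hasDerivWithinAt))
      exact this p (right_mem_Icc.mpr hqp)
    intro p hp
    have hK0 : Tendsto K (𝓝[Ioo (0:ℝ) 1] 0) (𝓝 0) := by
      have := hF0.add (hm0.const_mul lam)
      simpa using this
    have hKev : ∀ᶠ q in 𝓝[Ioo (0:ℝ) 1] 0, K p = K q := by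
      filter_upwards [self_mem_nhdsWithin, nhdsWithin_le_nhds (Iio_mem_nhds hp.1)]
        with q hq hq'
      exact hKconst p hp q hq (le_of_lt hq')
    have hKc : Tendsto (fun _ : ℝ => K p) (𝓝[Ioo (0:ℝ) 1] 0) (𝓝 0) :=
      hK0.congr' (hKev.mono fun q h => h.symm)
    have hKp0 : K p = 0 := tendsto_nhds_unique tendsto_const_nhds hKc
    have : F p + lam * m p = 0 := hKp0
    linarith
  -- the function h and its primitive I
  set β : ℝ := b / 2 with hβdef
  have hβ0 : 0 < β := by positivity
  have hβb : β < b := by rw [hβdef]; linarith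
  have hβS : β ∈ Ioo (0:ℝ) 1 := ⟨hβ0, hβb.trans hb1⟩
  set h : ℝ → ℝ := fun p => phi p / v p with hhdef
  have hhcont : ContinuousOn h (Ioo (0:ℝ) 1) :=
    hφcont.div hvcont (fun x hx => (hvpos x hx).ne')
  have hhii : ∀ {x y : ℝ}, x ∈ Ioo (0:ℝ) 1 → y ∈ Ioo (0:ℝ) 1 →
      IntervalIntegrable h volume x y := by
    intro x y hx hy
    exact (hhcont.mono (Set.ordConnected_Ioo.uIcc_subset hx hy)).intervalIntegrable
  set I : ℝ → ℝ := fun p => ∫ t in β..p, h t with hIdef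
  have hId : ∀ p ∈ Ioo (0:ℝ) 1, HasDerivAt I (h p) p := by
    intro p hp
    exact intervalIntegral.integral_hasDerivAt_right (hhii hβS hp)
      (hhcont.stronglyMeasurableAtFilter isOpen_Ioo p hp)
      (hhcont.continuousAt (isOpen_Ioo.mem_nhds hp))
  have hIbd : ∀ p ∈ Ioo (0:ℝ) b, |I p| ≤ Cb * b := by
    intro p hp
    have h1 : ∀ x ∈ Set.uIoc β p, ‖h x‖ ≤ Cb := by
      intro x hx
      rw [Set.uIoc] at hx
      have hx1 : 0 < x := lt_of_lt_of_le (lt_min hβ0 hp.1) hx.1.le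
      have hx2 : x < b := lt_of_le_of_lt hx.2 (max_lt hβb hp.2)
      exact hhbd x ⟨hx1, hx2⟩
    have h2 := intervalIntegral.norm_integral_le_of_norm_le_const h1
    have h3 : |p - β| ≤ b := by
      rw [abs_le]; constructor <;> [linarith [hp.1, hβb]; linarith [hp.2, hβ0]]
    calc |I p| ≤ Cb * |p - β| := h2
      _ ≤ Cb * b := by nlinarith
  -- limit of I at 0
  have hIntH : IntegrableOn h (Ioc (0:ℝ) β) := by
    have hmeas : AEStronglyMeasurable h (volume.restrict (Ioc (0:ℝ) β)) := by
      apply ContinuousOn.aestronglyMeasurable ?_ measurableSet_Ioc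
      exact hhcont.mono (fun x hx => ⟨hx.1, lt_of_le_of_lt hx.2 hβS.2⟩)
    refine ⟨hmeas, HasFiniteIntegral.restrict_of_bounded (C := Cb)
      measure_Ioc_lt_top ?_⟩
    rw [ae_restrict_iff' measurableSet_Ioc]
    refine ae_of_all _ fun x hx => ?_
    exact hhbd x ⟨hx.1, lt_of_le_of_lt hx.2 hβb⟩
  have hIlim : Tendsto I (𝓝[Ioo (0:ℝ) 1] 0) (𝓝 (-(∫ t in (0:ℝ)..β, h t))) := by
    rw [hrestr β hβ0 hβS.2.le]
    have hJc : ContinuousOn (fun x => ∫ t in Ioc (0:ℝ) x, h t) (Icc 0 β) :=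
      continuousOn_primitive (by rw [integrableOn_Icc_iff_integrableOn_Ioc]; exact hIntH)
    have hJ0 : Tendsto (fun x => ∫ t in Ioc (0:ℝ) x, h t) (𝓝[Ioo (0:ℝ) β] 0) (𝓝 0) := by
      have h2 := (hJc 0 (left_mem_Icc.mpr hβ0.le)).tendsto
      have h3 : (∫ t in Ioc (0:ℝ) (0:ℝ), h t) = 0 := by simp
      rw [h3] at h2
      exact h2.mono_left (nhdsWithin_mono _ Ioo_subset_Icc_self)
    have := (tendsto_const_nhds (x := -(∫ t in (0:ℝ)..β, h t))
      (f := 𝓝[Ioo (0:ℝ) β] (0:ℝ))).add hJ0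
    rw [add_zero] at this
    refine this.congr' ?_
    filter_upwards [self_mem_nhdsWithin] with p hp
    have hii0 : IntervalIntegrable h volume 0 β := by
      rw [intervalIntegrable_iff_integrableOn_Ioc_of_le hβ0.le]; exact hIntH
    have hiip : IntervalIntegrable h volume 0 p := by
      rw [intervalIntegrable_iff_integrableOn_Ioc_of_le hp.1.le]
      exact hIntH.mono_set (Ioc_subset_Ioc le_rfl hp.2.le)
    have hadd := intervalIntegral.integral_add_adjacent_intervals hii0.symm hiip
    rw [hIdef]
    simp only []
    rw [← hadd, intervalIntegral.integral_symm, intervalIntegral.integral_of_le hp.1.le]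
    simp
  -- G and its derivative
  set G : ℝ → ℝ := fun p => Real.exp (-I p) * pi p with hGdef
  have hGd : ∀ p ∈ Ioo (0:ℝ) 1,
      HasDerivAt G (Real.exp (-I p) * (2 * lam * m p / v p)) p := by
    intro p hp
    have h1 : HasDerivAt (fun q => Real.exp (-I q)) (Real.exp (-I p) * (-h p)) p :=
      ((hId p hp).neg).exp
    have h2 := h1.mul (hform p hp)
    refine HasDerivAt.congr_deriv h2 ?_
    have hvne : v p ≠ 0 := (hvpos p hp).ne'
    rw [hKeq p hp, hhdef]
    field_simp
    ring
  have hGcont : ContinuousOn G (Ioo (0:ℝ) 1) :=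
    fun x hx => ((hGd x hx).continuousAt).continuousWithinAt
  have hGpos : ∀ p ∈ Ioo (0:ℝ) 1, 0 < G p :=
    fun p hp => mul_pos (Real.exp_pos _) (hπpos p hp)
  have hGmono : MonotoneOn G (Ioo (0:ℝ) b) := by
    apply monotoneOn_of_deriv_nonneg (convex_Ioo 0 b) (hGcont.mono hbS)
    · rw [interior_Ioo]
      exact fun x hx => ((hGd x (hbS hx)).differentiableAt).differentiableWithinAt
    · intro x hx
      rw [interior_Ioo] at hx
      rw [(hGd x (hbS hx)).deriv]
      have := hmnonneg x (hbS hx)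
      have := (hvpos x (hbS hx))
      positivity
  have hne : (Ioo (0:ℝ) b).Nonempty := ⟨β, hβ0, hβb⟩
  have hGbdd : BddBelow (G '' Ioo (0:ℝ) b) := by
    refine ⟨0, ?_⟩
    rintro y ⟨x, hx, rfl⟩
    exact (hGpos x (hbS hx)).le
  set L : ℝ := sInf (G '' Ioo (0:ℝ) b) with hLdef
  have hGlim : Tendsto G (𝓝[>] (0:ℝ)) (𝓝 L) :=
    MonotoneOn.tendsto_nhdsWithin_Ioo_right hne hGmono hGbdd
  have hGlim' : Tendsto G (𝓝[Ioo (0:ℝ) 1] 0) (𝓝 L) := hGlim.mono_left hle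
  have hL0 : 0 ≤ L := le_csInf (hne.image _) (by rintro y ⟨x, hx, rfl⟩; exact (hGpos x (hbS hx)).le)
  -- FTC for G
  have hG'cont : ContinuousOn (fun t => Real.exp (-I t) * (2 * lam * m t / v t)) (Ioo (0:ℝ) 1) := by
    have hIcont : ContinuousOn I (Ioo (0:ℝ) 1) :=
      fun x hx => ((hId x hx).continuousAt).continuousWithinAt
    have hmcont : ContinuousOn m (Ioo (0:ℝ) 1) :=
      fun x hx => ((hmd x hx).continuousAt).continuousWithinAt
    exact (Real.continuous_exp.comp_continuousOn hIcont.neg).mul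
      ((continuousOn_const.mul hmcont).div hvcont (fun x hx => (hvpos x hx).ne'))
  have hFTC : ∀ q ∈ Ioo (0:ℝ) b, ∀ p ∈ Ioo (0:ℝ) b, q ≤ p →
      G p - G q = ∫ t in q..p, Real.exp (-I t) * (2 * lam * m t / v t) := by
    intro q hq p hp hqp
    have hsub : Set.uIcc q p ⊆ Ioo (0:ℝ) 1 := by
      rw [Set.uIcc_of_le hqp]
      exact fun x hx => hbS ⟨lt_of_lt_of_le hq.1 hx.1, lt_of_le_of_lt hx.2 hp.2⟩
    exact (intervalIntegral.integral_eq_sub_of_hasDerivAt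
      (fun x hx => hGd x (hsub hx))
      ((hG'cont.mono hsub).intervalIntegrable)).symm
  -- positivity of L
  have hLpos : 0 < L := by
    rcases hL0.lt_or_eq with hpos | heq
    · exact hpos
    exfalso
    set e1 : ℝ := Real.exp (-(Cb * b)) with he1
    set e2 : ℝ := Real.exp (Cb * b) with he2
    have he1p : 0 < e1 := Real.exp_pos _
    have he2p : 0 < e2 := Real.exp_pos _
    have hexp_bd : ∀ t ∈ Ioo (0:ℝ) b, e1 ≤ Real.exp (-I t) ∧ Real.exp (-I t) ≤ e2 := by
      intro t ht
      have := hIbd t ht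
      rw [abs_le] at this
      exact ⟨Real.exp_le_exp.mpr (by linarith), Real.exp_le_exp.mpr (by linarith)⟩
    set E : ℝ := 4 * lam * e2 / (e1 * a) with hEdef
    have hE0 : 0 ≤ E := by positivity
    set p : ℝ := min β (1 / (E + 1)) with hpdef
    have hp0 : 0 < p := lt_min hβ0 (by positivity)
    have hpβ : p ≤ β := min_le_left _ _
    have hpE : E * p < 1 := by
      have h1 : p ≤ 1 / (E + 1) := min_le_right _ _
      have h2 : E * p ≤ E * (1 / (E + 1)) := by nlinarith
      have h3 : E * (1 / (E + 1)) < 1 := by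
        rw [mul_one_div, div_lt_one (by linarith)]; linarith
      linarith
    have hpb : p ∈ Ioo (0:ℝ) b := ⟨hp0, lt_of_le_of_lt hpβ hβb⟩
    have hGp : 0 < G p := hGpos p (hbS hpb)
    -- bound on pi on (0, p]
    have hπbd : ∀ q ∈ Ioo (0:ℝ) b, q ≤ p → pi q ≤ G p / e1 := by
      intro q hq hqp
      have h1 : G q ≤ G p := hGmono hq hpb hqp
      have h2 : pi q = G q / Real.exp (-I q) := by
        rw [hGdef]
        field_simp
      rw [h2]
      exact div_le_div₀ hGp.le h1 he1p (hexp_bd q hq).1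
    -- bound on m on (0, p]
    have hmbd : ∀ t ∈ Ioo (0:ℝ) b, t ≤ p → m t ≤ G p / e1 * t := by
      intro t ht htp
      rw [hmIoo t (hbS ht)]
      have h1 : ∫ x in Ioo (0:ℝ) t, pi x ≤ ∫ _x in Ioo (0:ℝ) t, G p / e1 := by
        apply setIntegral_mono_on
        · exact hπint.mono_set (fun x hx => ⟨hx.1, hx.2.trans (ht.2.trans hb1)⟩)
        · exact integrableOn_const measure_Ioo_lt_top.ne
        · exact measurableSet_Ioo
        · intro x hx
          exact hπbd x ⟨hx.1, hx.2.trans ht.2⟩ (le_of_lt (lt_of_lt_of_le hx.2 htp))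
      have h2 : ∫ _x in Ioo (0:ℝ) t, G p / e1 = G p / e1 * t := by
        rw [setIntegral_const]
        rw [Real.volume_real_Ioo_of_le ht.1.le]
        rw [smul_eq_mul]
        ring
      linarith
    -- integrand bound
    set D : ℝ := E * G p with hDdef
    have hintbd : ∀ q ∈ Ioo (0:ℝ) p, G p ≤ G q + D * p := by
      intro q hq
      have hqb : q ∈ Ioo (0:ℝ) b := ⟨hq.1, hq.2.trans hpb.2⟩
      have h1 := hFTC q hqb p hpb hq.2.le
      have h2 : ∀ x ∈ Set.uIoc q p, ‖Real.exp (-I x) * (2 * lam * m x / v x)‖ ≤ D := by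
        intro x hx
        rw [Set.uIoc_of_le hq.2.le] at hx
        have hxb : x ∈ Ioo (0:ℝ) b := ⟨hq.1.trans hx.1, lt_of_le_of_lt hx.2 hpb.2⟩
        have hxp : x ≤ p := hx.2
        have hx0 : 0 < x := hq.1.trans hx.1
        have hv1 : a / 2 * x ≤ v x := (hbd x hxb).1
        have hv2 : 0 < v x := hvpos x (hbS hxb)
        have hm1 : m x ≤ G p / e1 * x := hmbd x hxb hxp
        have hm0 : 0 ≤ m x := hmnonneg x (hbS hxb)
        have hquot : 2 * lam * m x / v x ≤ 4 * lam * (G p / e1) / a := by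
          have hnum : 2 * lam * m x ≤ 2 * lam * (G p / e1) * x := by nlinarith
          have h4 : 2 * lam * m x / v x ≤ 2 * lam * (G p / e1) * x / (a / 2 * x) := by
            apply div_le_div₀ (by positivity) hnum (by positivity) hv1
          have h5 : 2 * lam * (G p / e1) * x / (a / 2 * x) = 4 * lam * (G p / e1) / a := by
            field_simp
            ring
          linarith [h4, h5.symm.le]
        have hquot0 : 0 ≤ 2 * lam * m x / v x := by positivity
        rw [norm_mul, Real.norm_eq_abs, Real.norm_eq_abs,
          abs_of_pos (Real.exp_pos _), abs_of_nonneg hquot0]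
        calc Real.exp (-I x) * (2 * lam * m x / v x)
            ≤ e2 * (4 * lam * (G p / e1) / a) := by
              apply mul_le_mul (hexp_bd x hxb).2 hquot hquot0 he2p.le
          _ = D := by rw [hDdef, hEdef]; field_simp
      have h3 := intervalIntegral.norm_integral_le_of_norm_le_const h2
      have h4 : |p - q| ≤ p := by rw [abs_le]; constructor <;> [linarith [hq.1, hq.2]; linarith [hq.1]]
      have h5 : G p - G q ≤ D * p := by
        have := le_abs_self (∫ t in q..p, Real.exp (-I t) * (2 * lam * m t / v t))
        have hD0 : 0 ≤ D := mul_nonneg hE0 hGp.le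
        calc G p - G q = ∫ t in q..p, Real.exp (-I t) * (2 * lam * m t / v t) := h1
          _ ≤ |∫ t in q..p, Real.exp (-I t) * (2 * lam * m t / v t)| := le_abs_self _
          _ ≤ D * |p - q| := h3
          _ ≤ D * p := by nlinarith
      linarith
    -- take the limit q → 0
    have hev : ∀ᶠ q in 𝓝[Ioo (0:ℝ) 1] 0, G p ≤ G q + D * p := by
      filter_upwards [self_mem_nhdsWithin, nhdsWithin_le_nhds (Iio_mem_nhds hp0)]
        with q hq hq'
      exact hintbd q ⟨hq.1, hq'⟩
    have hlim2 : Tendsto (fun q => G q + D * p) (𝓝[Ioo (0:ℝ) 1] 0) (𝓝 (L + D * p)) :=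
      hGlim'.add_const _
    have hfinal : G p ≤ L + D * p := ge_of_tendsto hlim2 hev
    rw [← heq, zero_add, hDdef] at hfinal
    nlinarith
  -- conclusion
  refine ⟨L / Real.exp (-(-(∫ t in (0:ℝ)..β, h t))), by positivity, ?_⟩
  have hclim : Tendsto (fun q => Real.exp (-I q)) (𝓝[Ioo (0:ℝ) 1] 0)
      (𝓝 (Real.exp (-(-(∫ t in (0:ℝ)..β, h t))))) :=
    (Real.continuous_exp.tendsto _).comp hIlim.neg
  have := hGlim'.div hclim (Real.exp_ne_zero _)
  refine this.congr fun q => ?_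
  rw [hGdef]
  simp only [Pi.div_apply]
  field_simp

/-- if `2μ(i) = v'(i)` and `λ wᵢ ≡ 0` on [0,1], then `π` has a strictly
positive limit at the boundary point `i`. -/
theorem stmt_7 (lam : ℝ) (v mu w0 pi : ℝ → ℝ)
    (H : ModelAssumptions lam v mu w0)
    (HP : StationaryDensity lam v mu w0 pi)
    (i : ℝ) (wi : ℝ → ℝ)
    (hwi : (i = 0 ∧ wi = w0) ∨ (i = 1 ∧ wi = fun p => 1 - w0 p))
    (hcase : 2 * mu i = deriv v i)
    (hw : ∀ p ∈ Icc (0 : ℝ) 1, lam * wi p = 0) :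
    ∃ L : ℝ, 0 < L ∧ Tendsto pi (𝓝[Ioo (0 : ℝ) 1] i) (𝓝 L) := by
  obtain ⟨U, hUo, hUsub, hvA, hmA, hwA⟩ := H.analytic
  have hmem : ∀ p ∈ Ioo (0:ℝ) 1, p ∈ U := fun p hp => hUsub (Ioo_subset_Icc_self hp)
  have h0U : (0:ℝ) ∈ U := hUsub ⟨le_rfl, zero_le_one⟩
  have h1U : (1:ℝ) ∈ U := hUsub ⟨zero_le_one, le_rfl⟩
  have hvA' : AnalyticOnNhd ℝ (deriv v) U := hvA.deriv
  set F : ℝ → ℝ := fun p => mu p * pi p - deriv (fun q => 1 / 2 * v q * pi q) p with hFdef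
  have hπdiff : ∀ p ∈ Ioo (0:ℝ) 1, HasDerivAt pi (deriv pi p) p := by
    intro p hp
    exact ((HP.contDiffOn.contDiffAt (isOpen_Ioo.mem_nhds hp)).differentiableAt
      (by norm_num)).hasDerivAt
  have hvC : ContDiffOn ℝ 2 v (Ioo (0:ℝ) 1) :=
    fun x hx => ((hvA x (hmem x hx)).contDiffAt).contDiffWithinAt
  have hgC2 : ContDiffOn ℝ 2 (fun q => 1 / 2 * v q * pi q) (Ioo (0:ℝ) 1) :=
    (contDiffOn_const.mul hvC).mul HP.contDiffOn
  have hdg : ContDiffOn ℝ 1 (deriv (fun q => 1 / 2 * v q * pi q)) (Ioo (0:ℝ) 1) :=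
    hgC2.deriv_of_isOpen isOpen_Ioo (by norm_num)
  have hFd : ∀ p ∈ Ioo (0:ℝ) 1, HasDerivAt F (-(lam * pi p)) p := by
    intro p hp
    have hmud : DifferentiableAt ℝ mu p := (hmA p (hmem p hp)).differentiableAt
    have hπd : DifferentiableAt ℝ pi p :=
      (HP.contDiffOn.contDiffAt (isOpen_Ioo.mem_nhds hp)).differentiableAt (by norm_num)
    have h1 : HasDerivAt (fun q => mu q * pi q) (deriv (fun q => mu q * pi q) p) p :=
      (hmud.mul hπd).hasDerivAt
    have h2 : HasDerivAt (deriv (fun q => 1 / 2 * v q * pi q))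
        (deriv (deriv (fun q => 1 / 2 * v q * pi q)) p) p :=
      ((hdg.differentiableOn one_ne_zero).differentiableAt (isOpen_Ioo.mem_nhds hp)).hasDerivAt
    have h3 := h1.sub h2
    have hode := HP.ode p hp
    refine HasDerivAt.congr_deriv h3 ?_
    linarith
  set phi : ℝ → ℝ := fun p => 2 * mu p - deriv v p with hφdef
  have hform : ∀ p ∈ Ioo (0:ℝ) 1, HasDerivAt pi ((phi p * pi p - 2 * F p) / v p) p := by
    intro p hp
    have hdv : HasDerivAt v (deriv v p) p := ((hvA p (hmem p hp)).differentiableAt).hasDerivAt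
    have hpi' := hπdiff p hp
    have hg : HasDerivAt (fun q => 1 / 2 * v q * pi q)
        (1 / 2 * deriv v p * pi p + 1 / 2 * v p * deriv pi p) p := by
      exact (hdv.const_mul (1/2 : ℝ)).mul hpi'
    have hvne : v p ≠ 0 := (H.v_pos p hp).ne'
    have hkey : (phi p * pi p - 2 * F p) / v p = deriv pi p := by
      rw [hFdef, hφdef]
      simp only []
      rw [hg.deriv]
      field_simp
      ring
    rw [hkey]
    exact hpi'
  have hφcont : ContinuousOn phi (Ioo (0:ℝ) 1) := by
    apply ContinuousOn.sub
    · exact continuousOn_const.mul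
        (fun x hx => (hmA x (hmem x hx)).continuousAt.continuousWithinAt)
    · exact fun x hx => (hvA' x (hmem x hx)).continuousAt.continuousWithinAt
  have hvcont : ContinuousOn v (Ioo (0:ℝ) 1) :=
    fun x hx => (hvA x (hmem x hx)).continuousAt.continuousWithinAt
  rcases hwi with ⟨rfl, hwieq⟩ | ⟨rfl, hwieq⟩ <;> rw [hwieq] at hw
  · -- case i = 0
    have hF0 : Tendsto F (𝓝[Ioo (0:ℝ) 1] 0) (𝓝 0) := by
      have hint0 : lam * ∫ p in Ioo (0:ℝ) 1, w0 p * pi p = 0 := by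
        have hz : ∀ p ∈ Ioo (0:ℝ) 1, lam * (w0 p * pi p) = 0 := by
          intro p hp
          have h1 : lam * w0 p = 0 := hw p (Ioo_subset_Icc_self hp)
          rw [← mul_assoc, h1, zero_mul]
        calc lam * ∫ p in Ioo (0:ℝ) 1, w0 p * pi p
            = ∫ p in Ioo (0:ℝ) 1, lam * (w0 p * pi p) :=
              (MeasureTheory.integral_const_mul lam _).symm
          _ = ∫ _p in Ioo (0:ℝ) 1, (0:ℝ) :=
              MeasureTheory.setIntegral_congr_fun measurableSet_Ioo hz
          _ = 0 := by simp
      have hbc := HP.bc_zero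
      rw [hint0] at hbc
      exact hbc
    have hφ0 : phi 0 = 0 := by
      rw [hφdef]; simp only []; linarith [hcase]
    have hφd : DifferentiableAt ℝ phi 0 := by
      rw [hφdef]
      exact (((hmA 0 h0U).differentiableAt).const_mul 2).sub (hvA' 0 h0U).differentiableAt
    have hva0 : HasDerivAt v (deriv v 0) 0 := (hvA 0 h0U).differentiableAt.hasDerivAt
    exact core_limit lam (deriv v 0) v phi pi F H.lam_nonneg HP.pos
      HP.contDiffOn.continuousOn HP.integrableOn H.v_pos hvcont hφcont hva0 H.v_zero
      H.deriv_v_zero_pos hφd hφ0 hFd hF0 hform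
  · -- case i = 1 : reflect
    have hρd : ∀ p : ℝ, HasDerivAt (fun q : ℝ => 1 - q) (-1) p := by
      intro p
      simpa using (hasDerivAt_id p).const_sub (1:ℝ)
    have hρmem : ∀ p ∈ Ioo (0:ℝ) 1, (1 - p) ∈ Ioo (0:ℝ) 1 := by
      intro p hp
      exact ⟨by linarith [hp.2], by linarith [hp.1]⟩
    have hρmem' : MapsTo (fun p : ℝ => 1 - p) (Ioo (0:ℝ) 1) (Ioo (0:ℝ) 1) := hρmem
    have hρc : Continuous fun p : ℝ => 1 - p := continuous_const.sub continuous_id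
    have hF1 : Tendsto F (𝓝[Ioo (0:ℝ) 1] 1) (𝓝 0) := by
      have hint0 : -(lam * ∫ p in Ioo (0:ℝ) 1, (1 - w0 p) * pi p) = 0 := by
        have hz : ∀ p ∈ Ioo (0:ℝ) 1, lam * ((1 - w0 p) * pi p) = 0 := by
          intro p hp
          have h1 : lam * (1 - w0 p) = 0 := hw p (Ioo_subset_Icc_self hp)
          rw [← mul_assoc, h1, zero_mul]
        have : lam * ∫ p in Ioo (0:ℝ) 1, (1 - w0 p) * pi p = 0 := by
          calc lam * ∫ p in Ioo (0:ℝ) 1, (1 - w0 p) * pi p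
              = ∫ p in Ioo (0:ℝ) 1, lam * ((1 - w0 p) * pi p) :=
                (MeasureTheory.integral_const_mul lam _).symm
            _ = ∫ _p in Ioo (0:ℝ) 1, (0:ℝ) :=
                MeasureTheory.setIntegral_congr_fun measurableSet_Ioo hz
            _ = 0 := by simp
        rw [this, neg_zero]
      have hbc := HP.bc_one
      rw [hint0] at hbc
      exact hbc
    have hπposR : ∀ p ∈ Ioo (0:ℝ) 1, 0 < pi (1 - p) :=
      fun p hp => HP.pos _ (hρmem p hp)
    have hπcontR : ContinuousOn (fun p => pi (1 - p)) (Ioo (0:ℝ) 1) :=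
      HP.contDiffOn.continuousOn.comp hρc.continuousOn hρmem'
    have hπintR : IntegrableOn (fun p => pi (1 - p)) (Ioo (0:ℝ) 1) := by
      have hpre : (fun t : ℝ => 1 - t) ⁻¹' (Ioo (0:ℝ) 1) = Ioo (0:ℝ) 1 := by
        ext x
        simp only [mem_preimage, mem_Ioo]
        constructor <;> rintro ⟨h1, h2⟩ <;> constructor <;> linarith
      have h1 := (Measure.measurePreserving_sub_left (volume : Measure ℝ)
        (1:ℝ)).integrableOn_comp_preimage
        (MeasurableEquiv.subLeft (1:ℝ)).measurableEmbedding (f := pi) (s := Ioo (0:ℝ) 1)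
      rw [hpre] at h1
      exact h1.mpr HP.integrableOn
    have hvposR : ∀ p ∈ Ioo (0:ℝ) 1, 0 < v (1 - p) :=
      fun p hp => H.v_pos _ (hρmem p hp)
    have hvcontR : ContinuousOn (fun p => v (1 - p)) (Ioo (0:ℝ) 1) :=
      hvcont.comp hρc.continuousOn hρmem'
    have hφcontR : ContinuousOn (fun p => -phi (1 - p)) (Ioo (0:ℝ) 1) :=
      (hφcont.comp hρc.continuousOn hρmem').neg
    have hvaR : HasDerivAt (fun p => v (1 - p)) (-(deriv v 1)) 0 := by
      have h1 : HasDerivAt v (deriv v 1) ((fun q : ℝ => 1 - q) 0) := by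
        rw [show ((fun q : ℝ => 1 - q) 0) = 1 by norm_num]
        exact (hvA 1 h1U).differentiableAt.hasDerivAt
      have h2 := h1.comp 0 (hρd 0)
      simp only [Function.comp_def] at h2
      refine HasDerivAt.congr_deriv h2 ?_
      ring
    have hv0R : (fun p => v (1 - p)) 0 = 0 := by
      show v (1 - 0) = 0
      rw [show (1:ℝ) - 0 = 1 by norm_num]
      exact H.v_one
    have haR : 0 < -(deriv v 1) := neg_pos.mpr H.deriv_v_one_neg
    have hφ0R : (fun p => -phi (1 - p)) 0 = 0 := by
      show -phi (1 - 0) = 0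
      rw [show (1:ℝ) - 0 = 1 by norm_num, hφdef]
      simp only []
      linarith [hcase]
    have hφdR : DifferentiableAt ℝ (fun p => -phi (1 - p)) 0 := by
      have h1 : DifferentiableAt ℝ (fun q : ℝ => 1 - q) 0 := (hρd 0).differentiableAt
      have h2 : DifferentiableAt ℝ phi ((fun q : ℝ => 1 - q) 0) := by
        rw [show ((fun q : ℝ => 1 - q) 0) = 1 by norm_num, hφdef]
        exact (((hmA 1 h1U).differentiableAt).const_mul 2).sub (hvA' 1 h1U).differentiableAt
      exact (h2.comp 0 h1).neg
    have hFdR : ∀ p ∈ Ioo (0:ℝ) 1, HasDerivAt (fun p => -F (1 - p))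
        (-(lam * pi (1 - p))) p := by
      intro p hp
      have h1 : HasDerivAt F (-(lam * pi (1 - p))) ((fun q : ℝ => 1 - q) p) :=
        hFd (1 - p) (hρmem p hp)
      have h2 := (h1.comp p (hρd p)).neg
      simp only [Function.comp_def] at h2
      refine HasDerivAt.congr_deriv h2 ?_
      ring
    have hρt0 : Tendsto (fun p : ℝ => 1 - p) (𝓝[Ioo (0:ℝ) 1] 0) (𝓝[Ioo (0:ℝ) 1] 1) := by
      have h1 := (hρc.continuousWithinAt (s := Ioo (0:ℝ) 1)
        (x := (0:ℝ))).tendsto_nhdsWithin hρmem'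
      rw [show (1:ℝ) - 0 = 1 from by norm_num] at h1
      exact h1
    have hF0R : Tendsto (fun p => -F (1 - p)) (𝓝[Ioo (0:ℝ) 1] 0) (𝓝 0) := by
      have h1 := (hF1.comp hρt0).neg
      simp only [Function.comp, neg_zero] at h1
      exact h1
    have hformR : ∀ p ∈ Ioo (0:ℝ) 1, HasDerivAt (fun q => pi (1 - q))
        (((fun p => -phi (1 - p)) p * pi (1 - p) - 2 * ((fun p => -F (1 - p)) p))
          / v (1 - p)) p := by
      intro p hp
      have h1 : HasDerivAt pi
          ((phi (1 - p) * pi (1 - p) - 2 * F (1 - p)) / v (1 - p)) ((fun q : ℝ => 1 - q) p) :=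
        hform (1 - p) (hρmem p hp)
      have h2 := h1.comp p (hρd p)
      simp only [Function.comp_def] at h2
      refine HasDerivAt.congr_deriv h2 ?_
      simp only []
      ring
    obtain ⟨L, hL, hlim⟩ := core_limit lam (-(deriv v 1)) (fun p => v (1 - p))
      (fun p => -phi (1 - p)) (fun p => pi (1 - p)) (fun p => -F (1 - p))
      H.lam_nonneg hπposR hπcontR hπintR hvposR hvcontR hφcontR hvaR hv0R haR
      hφdR hφ0R hFdR hF0R hformR
    refine ⟨L, hL, ?_⟩
    have hρt1 : Tendsto (fun p : ℝ => 1 - p) (𝓝[Ioo (0:ℝ) 1] 1) (𝓝[Ioo (0:ℝ) 1] 0) := by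
      have h1 := (hρc.continuousWithinAt (s := Ioo (0:ℝ) 1)
        (x := (1:ℝ))).tendsto_nhdsWithin hρmem'
      rw [show (1:ℝ) - 1 = 0 from by norm_num] at h1
      exact h1
    have h2 := hlim.comp hρt1
    refine h2.congr fun p => ?_
    simp only [Function.comp]
    rw [sub_sub_cancel]
end
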